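/- arXiv:1907.01781 — 7 statements merged into one kernel-verified Lean document; each statement's English description precedes it below -/
import Mathlib

section
/- Let p : X → [0,1] be measurable on a probability space (X, P_X) and let U be uniform on [0,1]. Define R = ∫_X 1_{p(x) > U} P_X(dx). Then for every integer m ≥ 1, E[R^m] = ∫_{X^m} min(p(x_1), ..., p(x_m)) P_X(dx_1)···P_X(dx_m). -/
open MeasureTheory

theorem stmt_2
    {Ω X : Type*} [MeasurableSpace Ω] [MeasurableSpace X]
    (ℙ : Measure Ω) [IsProbabilityMeasure ℙ]
    (μ : Measure X) [IsProbabilityMeasure μ]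
    (p : X → ℝ) (hpm : Measurable p) (hp01 : ∀ x, p x ∈ Set.Icc (0:ℝ) 1)
    (U : Ω → ℝ) (hUm : Measurable U)
    (hU : Measure.map U ℙ = volume.restrict (Set.Icc (0:ℝ) 1))
    (R : Ω → ℝ) (hR : ∀ ω, R ω = (μ {x | U ω < p x}).toReal)
    (m : ℕ) (hm : 1 ≤ m) :
    ∫ ω, (R ω) ^ m ∂ℙ
      = ∫ x : Fin m → X, ⨅ i, p (x i) ∂(Measure.pi fun _ => μ) := by
  have hmne : Nonempty (Fin m) := ⟨⟨0, hm⟩⟩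
  set π : Measure (Fin m → X) := Measure.pi fun _ => μ with hπ
  -- the infimum function
  set c : (Fin m → X) → ℝ := fun y => ⨅ i, p (y i) with hc
  have hcm : Measurable c := Measurable.iInf fun i => hpm.comp (measurable_pi_apply i)
  have hc0 : ∀ y, 0 ≤ c y := fun y => le_ciInf fun i => (hp01 (y i)).1
  have hbdd : ∀ y : Fin m → X, BddBelow (Set.range fun i => p (y i)) :=
    fun y => (Set.finite_range _).bddBelow
  have hc1 : ∀ y, c y ≤ 1 := fun y =>
    (ciInf_le (hbdd y) (Classical.arbitrary (Fin m))).trans (hp01 _).2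
  have hciff : ∀ (u : ℝ) (y : Fin m → X), (∀ i, u < p (y i)) ↔ u < c y := by
    intro u y
    constructor
    · intro h
      obtain ⟨i₀, hi₀⟩ := Finite.exists_min fun i => p (y i)
      have : c y = p (y i₀) := le_antisymm (ciInf_le (hbdd y) i₀) (le_ciInf hi₀)
      rw [this]; exact h i₀
    · intro h i
      exact lt_of_lt_of_le h (ciInf_le (hbdd y) i)
  -- the product set
  have hTm : MeasurableSet {q : ℝ × (Fin m → X) | ∀ i, q.1 < p (q.2 i)} := by
    have : {q : ℝ × (Fin m → X) | ∀ i, q.1 < p (q.2 i)}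
        = ⋂ i, {q : ℝ × (Fin m → X) | q.1 < p (q.2 i)} := by
      ext q; simp
    rw [this]
    exact MeasurableSet.iInter fun i =>
      measurableSet_lt measurable_fst (hpm.comp ((measurable_pi_apply i).comp measurable_snd))
  -- measurability of u ↦ μ {x | u < p x}
  have hFm : Measurable fun u : ℝ => μ {x | u < p x} := by
    have hs : MeasurableSet {q : ℝ × X | q.1 < p q.2} :=
      measurableSet_lt measurable_fst (hpm.comp measurable_snd)
    exact measurable_measure_prodMk_left hs
  have hGm : Measurable fun u : ℝ => π {y | ∀ i, u < p (y i)} :=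
    measurable_measure_prodMk_left hTm
  -- Step 1: change of variables
  have hg : Measurable fun u : ℝ => ((μ {x | u < p x}).toReal) ^ m :=
    (hFm.ennreal_toReal).pow_const m
  have step1 : ∫ ω, (R ω) ^ m ∂ℙ
      = ∫ u in Set.Icc (0:ℝ) 1, ((μ {x | u < p x}).toReal) ^ m := by
    have h := integral_map (μ := ℙ) hUm.aemeasurable
      (f := fun u : ℝ => ((μ {x | u < p x}).toReal) ^ m) hg.aestronglyMeasurable
    rw [hU] at h
    calc ∫ ω, (R ω) ^ m ∂ℙ
        = ∫ ω, (fun u : ℝ => ((μ {x | u < p x}).toReal) ^ m) (U ω) ∂ℙ :=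
          integral_congr_ae (Filter.Eventually.of_forall fun ω => by simp only [hR ω])
      _ = ∫ u in Set.Icc (0:ℝ) 1, ((μ {x | u < p x}).toReal) ^ m := h.symm
  -- Step 2: power as pi measure
  have step2 : ∀ u : ℝ, ((μ {x | u < p x}).toReal) ^ m
      = (π {y | ∀ i, u < p (y i)}).toReal := by
    intro u
    have : {y : Fin m → X | ∀ i, u < p (y i)} = Set.univ.pi fun _ => {x | u < p x} := by
      ext y; simp [Set.mem_pi]
    rw [this, hπ, Measure.pi_pi]
    simp [ENNReal.toReal_pow]
  -- Step 3: integral toReal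
  have step3 : ∫ u in Set.Icc (0:ℝ) 1, (π {y | ∀ i, u < p (y i)}).toReal
      = (∫⁻ u in Set.Icc (0:ℝ) 1, π {y | ∀ i, u < p (y i)}).toReal := by
    refine integral_toReal hGm.aemeasurable ?_
    exact Filter.Eventually.of_forall fun u => measure_lt_top _ _
  -- Step 4: Fubini
  have step4 : (∫⁻ u in Set.Icc (0:ℝ) 1, π {y | ∀ i, u < p (y i)})
      = ∫⁻ y, ENNReal.ofReal (c y) ∂π := by
    have h1 : ∀ u : ℝ, π {y | ∀ i, u < p (y i)}
        = ∫⁻ y, Set.indicator {q : ℝ × (Fin m → X) | ∀ i, q.1 < p (q.2 i)}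
            (fun _ => (1 : ENNReal)) (u, y) ∂π := by
      intro u
      have hpre : MeasurableSet (Prod.mk u ⁻¹'
          {q : ℝ × (Fin m → X) | ∀ i, q.1 < p (q.2 i)}) := hTm.preimage (measurable_prodMk_left)
      rw [show (fun y => Set.indicator {q : ℝ × (Fin m → X) | ∀ i, q.1 < p (q.2 i)}
            (fun _ => (1 : ENNReal)) (u, y))
          = Set.indicator (Prod.mk u ⁻¹' {q : ℝ × (Fin m → X) | ∀ i, q.1 < p (q.2 i)})
            (fun _ => (1 : ENNReal)) from rfl]
      rw [lintegral_indicator hpre, setLIntegral_one]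
      rfl
    calc (∫⁻ u in Set.Icc (0:ℝ) 1, π {y | ∀ i, u < p (y i)})
        = ∫⁻ u in Set.Icc (0:ℝ) 1, (∫⁻ y,
            Set.indicator {q : ℝ × (Fin m → X) | ∀ i, q.1 < p (q.2 i)}
              (fun _ => (1 : ENNReal)) (u, y) ∂π) := by
          exact lintegral_congr fun u => h1 u
      _ = ∫⁻ y, (∫⁻ u in Set.Icc (0:ℝ) 1,
            Set.indicator {q : ℝ × (Fin m → X) | ∀ i, q.1 < p (q.2 i)}
              (fun _ => (1 : ENNReal)) (u, y)) ∂π := by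
          refine lintegral_lintegral_swap ?_
          exact (measurable_one.indicator hTm).aemeasurable
      _ = ∫⁻ y, ENNReal.ofReal (c y) ∂π := by
          refine lintegral_congr fun y => ?_
          have hset : (fun u : ℝ => Set.indicator
              {q : ℝ × (Fin m → X) | ∀ i, q.1 < p (q.2 i)} (fun _ => (1 : ENNReal)) (u, y))
              = Set.indicator (Set.Iio (c y)) (fun _ => (1 : ENNReal)) := by
            funext u
            simp only [Set.indicator_apply, Set.mem_setOf_eq, Set.mem_Iio, hciff u y]
          rw [hset, lintegral_indicator measurableSet_Iio, setLIntegral_one,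
            Measure.restrict_apply measurableSet_Iio]
          have : Set.Iio (c y) ∩ Set.Icc (0:ℝ) 1 = Set.Ico 0 (c y) := by
            ext u
            simp only [Set.mem_inter_iff, Set.mem_Iio, Set.mem_Icc, Set.mem_Ico]
            constructor
            · rintro ⟨h1, h2, _⟩; exact ⟨h2, h1⟩
            · rintro ⟨h1, h2⟩; exact ⟨h2, h1, le_of_lt (lt_of_lt_of_le h2 (hc1 y))⟩
          rw [this, Real.volume_Ico, sub_zero]
  -- Step 5: back to Bochner integral
  have step5 : ∫ y, c y ∂π = (∫⁻ y, ENNReal.ofReal (c y) ∂π).toReal := by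
    exact integral_eq_lintegral_of_nonneg_ae (Filter.Eventually.of_forall hc0)
      hcm.aestronglyMeasurable
  rw [step1]
  rw [show (fun u : ℝ => ((μ {x | u < p x}).toReal) ^ m)
      = fun u : ℝ => (π {y | ∀ i, u < p (y i)}).toReal from funext step2]
  rw [step3, step4, ← step5]
end

section
/- Let ξ be a stochastic process on a probability space indexed by a set X with measurable paths, T ∈ ℝ a threshold, and X̄ an X-valued random variable with law P_X independent of ξ. Define S = ∫_X 1_{ξ(x) > T} P_X(dx) (a random variable depending on ξ), p(x) = P(ξ(x) > T), U uniform on [0,1], and R = ∫_X 1_{p(x) > U} P_X(dx). Then S is smaller than R in the convex order: for every convex function φ : ℝ → ℝ such that the expectations exist, E[φ(S)] ≤ E[φ(R)]. -/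
open MeasureTheory


lemma bddInt {α : Type*} [MeasurableSpace α] (κ : Measure α) [IsFiniteMeasure κ]
    {f : α → ℝ} (hf : AEStronglyMeasurable f κ) {C : ℝ} (h : ∀ x, |f x| ≤ C) :
    Integrable f κ :=
  (integrable_const C).mono' hf (Filter.Eventually.of_forall h)

lemma wSwap {α β : Type*} [MeasurableSpace α] [MeasurableSpace β]
    (κ : Measure α) (ν : Measure β) [IsFiniteMeasure κ] [IsFiniteMeasure ν]
    {A : Set (α × β)} (hA : MeasurableSet A) {w : β → ℝ} (hw : Measurable w)
    (hwb : ∀ x, |w x| ≤ 1) :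
    ∫ ω, (∫ x, w x * A.indicator 1 (ω, x) ∂ν) ∂κ
      = ∫ x, w x * (κ ((fun ω => (ω, x)) ⁻¹' A)).toReal ∂ν := by
  have hind : Measurable (A.indicator (1 : α × β → ℝ)) := measurable_one.indicator hA
  have hmeas : Measurable (fun z : α × β => w z.2 * A.indicator 1 z) :=
    (hw.comp measurable_snd).mul hind
  have hint : Integrable (Function.uncurry (fun ω x => w x * A.indicator 1 (ω, x))) (κ.prod ν) := by
    refine bddInt _ hmeas.aestronglyMeasurable (C := 1) ?_
    rintro ⟨ω, x⟩
    simp only [Function.uncurry, abs_mul]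
    by_cases h : (ω, x) ∈ A
    · simp only [Set.indicator_of_mem h, Pi.one_apply, abs_one, mul_one]
      exact hwb x
    · simp [Set.indicator_of_notMem h]
  rw [integral_integral_swap hint]
  refine integral_congr_ae (Filter.Eventually.of_forall fun x => ?_)
  show (∫ ω, w x * A.indicator 1 (ω, x) ∂κ) = _
  have : (fun ω => w x * A.indicator 1 (ω, x))
      = fun ω => w x * ((fun ω => (ω, x)) ⁻¹' A).indicator (1 : α → ℝ) ω := by
    funext ω
    by_cases h : (ω, x) ∈ A <;> simp [Set.indicator, h]
  rw [this, integral_const_mul, integral_indicator_one (measurable_prodMk_right hA), measureReal_def]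

lemma secSwap {α β : Type*} [MeasurableSpace α] [MeasurableSpace β]
    (κ : Measure α) (ν : Measure β) [IsFiniteMeasure κ] [IsFiniteMeasure ν]
    {A : Set (α × β)} (hA : MeasurableSet A) :
    ∫ ω, (ν (Prod.mk ω ⁻¹' A)).toReal ∂κ
      = ∫ x, (κ ((fun ω => (ω, x)) ⁻¹' A)).toReal ∂ν := by
  have h1 : ∀ ω, (ν (Prod.mk ω ⁻¹' A)).toReal
      = ∫ x, (1:ℝ) * A.indicator 1 (ω, x) ∂ν := by
    intro ω
    rw [← measureReal_def, ← integral_indicator_one (measurable_prodMk_left hA)]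
    refine integral_congr_ae (Filter.Eventually.of_forall fun x => ?_)
    by_cases h : (ω, x) ∈ A <;> simp [Set.indicator, h]
  simp_rw [h1]
  rw [wSwap κ ν hA (w := fun _ => (1:ℝ)) measurable_const (by norm_num)]
  simp


section SL
variable {Ω X : Type*} [MeasurableSpace Ω] [MeasurableSpace X]
  (ℙ : Measure Ω) [IsProbabilityMeasure ℙ] (μ : Measure X) [IsProbabilityMeasure μ]

-- choice of the threshold t and the function d
lemma exists_td (p : X → ℝ) (hpm : Measurable p) (hp0 : ∀ x, 0 ≤ p x) (hp1 : ∀ x, p x ≤ 1)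
    {a : ℝ} (ha0 : 0 ≤ a) (ha1 : a ≤ 1) :
    ∃ (t : ℝ) (d : X → ℝ), 0 ≤ t ∧ t ≤ 1 ∧ Measurable d ∧ (∀ x, 0 ≤ d x ∧ d x ≤ 1) ∧
      (∫ x, d x ∂μ) = a ∧ (∀ x, d x * (p x - t) = max (p x - t) 0) := by
  set G : ℝ → ℝ := fun u => (μ {x | u < p x}).toReal with hG
  set Q : Set ℝ := {u | u ∈ Set.Icc (0:ℝ) 1 ∧ G u ≤ a} with hQdef
  have hQ1 : (1:ℝ) ∈ Q := by
    constructor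
    · simp
    · have : {x | (1:ℝ) < p x} = ∅ := by
        ext x; simp only [Set.mem_setOf_eq, Set.mem_empty_iff_false, iff_false, not_lt]
        exact hp1 x
      simp [hG, this, ha0]
  have hQne : Q.Nonempty := ⟨1, hQ1⟩
  have hQbdd : BddBelow Q := ⟨0, fun q hq => hq.1.1⟩
  set t := sInf Q with htdef
  have ht0 : 0 ≤ t := le_csInf hQne (fun q hq => hq.1.1)
  have ht1 : t ≤ 1 := csInf_le hQbdd hQ1
  -- Claim 1 : μ {x | t < p x} ≤ ofReal a
  have claim1 : μ {x | t < p x} ≤ ENNReal.ofReal a := by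
    have hsub : {x | t < p x} = ⋃ n : ℕ, {x | t + 1/(n+1) < p x} := by
      ext x
      simp only [Set.mem_setOf_eq, Set.mem_iUnion]
      constructor
      · intro h
        obtain ⟨n, hn⟩ := exists_nat_one_div_lt (sub_pos.2 h)
        exact ⟨n, by linarith⟩
      · rintro ⟨n, hn⟩
        have : (0:ℝ) < 1/(n+1) := by positivity
        linarith
    have hmono : Monotone fun n : ℕ => {x | t + 1/(n+1) < p x} := by
      intro n m hnm x hx
      simp only [Set.mem_setOf_eq] at *
      have h1 : (1:ℝ)/(m+1) ≤ 1/(n+1) := by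
        apply one_div_le_one_div_of_le (by positivity)
        exact_mod_cast by omega
      linarith
    rw [hsub, hmono.measure_iUnion]
    refine iSup_le fun n => ?_
    have hpos : (0:ℝ) < 1/(n+1) := by positivity
    obtain ⟨q, hqQ, hq⟩ := exists_lt_of_csInf_lt hQne (show sInf Q < t + 1/(n+1) by linarith)
    have hsub2 : {x | t + 1/(n+1) < p x} ⊆ {x | q < p x} := by
      intro x hx; simp only [Set.mem_setOf_eq] at *; linarith
    refine le_trans (measure_mono hsub2) ?_
    rw [ENNReal.le_ofReal_iff_toReal_le (measure_ne_top μ _) ha0]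
    exact hqQ.2
  -- Claim 2 : ofReal a ≤ μ {x | t ≤ p x}
  have claim2 : ENNReal.ofReal a ≤ μ {x | t ≤ p x} := by
    have hsub : {x | t ≤ p x} = ⋂ n : ℕ, {x | t - 1/(n+1) < p x} := by
      ext x
      simp only [Set.mem_setOf_eq, Set.mem_iInter]
      constructor
      · intro h n
        have : (0:ℝ) < 1/(n+1) := by positivity
        linarith
      · intro h
        by_contra hc
        push_neg at hc
        obtain ⟨n, hn⟩ := exists_nat_one_div_lt (sub_pos.2 hc)
        have := h n
        linarith
    have hanti : Antitone fun n : ℕ => {x | t - 1/(n+1) < p x} := by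
      intro n m hnm x hx
      simp only [Set.mem_setOf_eq] at *
      have h1 : (1:ℝ)/(m+1) ≤ 1/(n+1) := by
        apply one_div_le_one_div_of_le (by positivity)
        exact_mod_cast by omega
      linarith
    rw [hsub, hanti.measure_iInter (fun n => ((measurableSet_lt measurable_const hpm)).nullMeasurableSet)
      ⟨0, measure_ne_top μ _⟩]
    refine le_iInf fun n => ?_
    rcases lt_or_ge (t - 1/(n+1)) 0 with hneg | hpos
    · have : {x | t - 1/(n+1) < p x} = Set.univ := by
        ext x; simp only [Set.mem_setOf_eq, Set.mem_univ, iff_true]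
        exact lt_of_lt_of_le hneg (hp0 x)
      rw [this, measure_univ]
      exact le_trans (ENNReal.ofReal_le_ofReal ha1) (by simp)
    · have hv : t - 1/(n+1) < t := by
        have : (0:ℝ) < 1/(n+1) := by positivity
        linarith
      have hnotQ : t - 1/(n+1) ∉ Q := notMem_of_lt_csInf hv hQbdd
      have : a < G (t - 1/(n+1)) := by
        by_contra hc
        push_neg at hc
        exact hnotQ ⟨⟨hpos, by linarith⟩, hc⟩
      exact ENNReal.ofReal_le_of_le_toReal this.le
  -- real versions
  set Bs : Set X := {x | t < p x} with hBs
  set Es : Set X := {x | p x = t} with hEs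
  have hBsm : MeasurableSet Bs := measurableSet_lt measurable_const hpm
  have hEsm : MeasurableSet Es := measurableSet_eq_fun hpm measurable_const
  set gb : ℝ := (μ Bs).toReal with hgb
  set ge : ℝ := (μ Es).toReal with hge
  have hgb_le : gb ≤ a := by
    have := ENNReal.toReal_mono ENNReal.ofReal_ne_top claim1
    rwa [ENNReal.toReal_ofReal ha0] at this
  have hunion : {x | t ≤ p x} = Bs ∪ Es := by
    ext x
    simp only [Set.mem_setOf_eq, Set.mem_union, hBs, hEs]
    constructor
    · intro h
      rcases lt_or_eq_of_le h with h' | h'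
      · exact Or.inl h'
      · exact Or.inr h'.symm
    · rintro (h | h)
      · exact h.le
      · exact h.ge
  have hdisj : Disjoint Bs Es := by
    rw [Set.disjoint_left]
    intro x hx hx'
    simp only [hBs, Set.mem_setOf_eq] at hx
    simp only [hEs, Set.mem_setOf_eq] at hx'
    linarith
  have ha_le : a ≤ gb + ge := by
    have h1 : μ {x | t ≤ p x} = μ Bs + μ Es := by
      rw [hunion, measure_union hdisj hEsm]
    have h2 := ENNReal.toReal_mono (by rw [h1]; exact ENNReal.add_ne_top.2 ⟨measure_ne_top μ _, measure_ne_top μ _⟩) claim2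
    rwa [ENNReal.toReal_ofReal ha0, h1, ENNReal.toReal_add (measure_ne_top μ _) (measure_ne_top μ _)] at h2
  have hge0 : 0 ≤ ge := ENNReal.toReal_nonneg
  set θ : ℝ := if ge = 0 then 0 else (a - gb)/ge with hθdef
  have hθ0 : 0 ≤ θ := by
    rw [hθdef]
    split_ifs with h
    · exact le_refl 0
    · exact div_nonneg (by linarith) hge0
  have hθ1 : θ ≤ 1 := by
    rw [hθdef]
    split_ifs with h
    · norm_num
    · rw [div_le_one (lt_of_le_of_ne hge0 (Ne.symm h))]
      linarith
  have hθge : θ * ge = a - gb := by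
    rw [hθdef]
    split_ifs with h
    · rw [h] at ha_le ⊢
      have : a = gb := le_antisymm (by linarith) hgb_le
      simp [this]
    · field_simp
  refine ⟨t, fun x => if t < p x then (1:ℝ) else if p x = t then θ else 0, ht0, ht1, ?_, ?_, ?_, ?_⟩
  · refine Measurable.ite hBsm measurable_const ?_
    exact Measurable.ite hEsm measurable_const measurable_const
  · intro x
    dsimp only
    split_ifs with h1 h2
    · exact ⟨zero_le_one, le_refl 1⟩
    · exact ⟨hθ0, hθ1⟩
    · exact ⟨le_refl 0, zero_le_one⟩
  · have heq : (fun x => if t < p x then (1:ℝ) else if p x = t then θ else 0)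
        = fun x => Bs.indicator (fun _ => (1:ℝ)) x + Es.indicator (fun _ => θ) x := by
      funext x
      by_cases h1 : t < p x
      · have h2 : ¬ p x = t := by linarith
        simp [Set.indicator, hBs, hEs, h1, h2]
      · by_cases h2 : p x = t <;> simp [Set.indicator, hBs, hEs, h1, h2]
    rw [heq, integral_add ((integrable_indicator_iff hBsm).2 (integrableOn_const (measure_ne_top μ _))) ((integrable_indicator_iff hEsm).2 (integrableOn_const (measure_ne_top μ _)))]
    rw [integral_indicator_const (1:ℝ) hBsm, integral_indicator_const θ hEsm]
    simp only [smul_eq_mul, mul_one]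
    rw [measureReal_def, measureReal_def, ← hgb, mul_comm, ← hge, hθge]
    ring
  · intro x
    dsimp only
    split_ifs with h1 h2
    · rw [one_mul, max_eq_left (by linarith)]
    · rw [h2]
      simp
    · push_neg at h1
      rw [zero_mul, max_eq_right (by cases lt_or_eq_of_le h1 with
        | inl h => linarith
        | inr h => exact absurd h h2)]

lemma minmax (t q : ℝ) : q - max (q - t) 0 = min t q := by
  rcases le_total q t with h | h
  · rw [max_eq_right (by linarith), min_eq_right h]; ring
  · rw [max_eq_left (by linarith), min_eq_left h]; ring

lemma stopLoss (ξ : Ω × X → ℝ) (hξ : Measurable ξ) (T : ℝ)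
    (p : X → ℝ) (hp : ∀ x, p x = (ℙ {ω | T < ξ (ω, x)}).toReal)
    {a : ℝ} (ha0 : 0 ≤ a) (ha1 : a ≤ 1) :
    ∫ ω, max ((μ {x | T < ξ (ω, x)}).toReal - a) 0 ∂ℙ
      ≤ ∫ u in Set.Icc (0:ℝ) 1, max ((μ {x | u < p x}).toReal - a) 0 := by
  have hA : MeasurableSet {z : Ω × X | T < ξ z} := measurableSet_lt measurable_const hξ
  set A : Set (Ω × X) := {z | T < ξ z} with hAdef
  have hpeq : p = fun x => (ℙ ((fun ω => (ω, x)) ⁻¹' A)).toReal := funext hp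
  have hpm : Measurable p := by
    rw [hpeq]; exact (measurable_measure_prodMk_right hA).ennreal_toReal
  have hto1 : ∀ (s : Set X), (μ s).toReal ≤ 1 := fun s => by
    simpa using ENNReal.toReal_mono (by norm_num) (prob_le_one (μ := μ) (s := s))
  have hto1' : ∀ (s : Set Ω), (ℙ s).toReal ≤ 1 := fun s => by
    simpa using ENNReal.toReal_mono (by norm_num) (prob_le_one (μ := ℙ) (s := s))
  have hp0 : ∀ x, 0 ≤ p x := fun x => by rw [hp x]; exact ENNReal.toReal_nonneg
  have hp1 : ∀ x, p x ≤ 1 := fun x => by rw [hp x]; exact hto1' _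
  obtain ⟨t, d, ht0, ht1, hdm, hd01, hdint, hdkey⟩ := exists_td μ p hpm hp0 hp1 ha0 ha1
  have hA' : MeasurableSet {z : ℝ × X | z.1 < p z.2} :=
    measurableSet_lt measurable_fst (hpm.comp measurable_snd)
  set g : ℝ → ℝ := fun u => (μ {x | u < p x}).toReal with hgdef
  have hgm : Measurable g := (measurable_measure_prodMk_left hA').ennreal_toReal
  haveI hfin1 : IsFiniteMeasure (volume.restrict (Set.Icc (0:ℝ) 1)) := by
    constructor
    rw [Measure.restrict_apply_univ, Real.volume_Icc]
    exact ENNReal.ofReal_lt_top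
  haveI hfin2 : IsFiniteMeasure (volume.restrict (Set.Ico (0:ℝ) t)) := by
    constructor
    rw [Measure.restrict_apply_univ, Real.volume_Ico]
    exact ENNReal.ofReal_lt_top
  set w : X → ℝ := fun x => 1 - d x with hwdef
  have hwm : Measurable w := measurable_const.sub hdm
  have hwb : ∀ x, |w x| ≤ 1 := by
    intro x
    rw [abs_le]
    constructor <;> simp only [hwdef] <;> [linarith [(hd01 x).2]; linarith [(hd01 x).1]]
  have hdb : ∀ x, |d x| ≤ 1 := fun x => abs_le.2 ⟨by linarith [(hd01 x).1], (hd01 x).2⟩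
  -- step 1 : pointwise bound
  have hSm : Measurable fun ω => (μ (Prod.mk ω ⁻¹' A)).toReal :=
    (measurable_measure_prodMk_left hA).ennreal_toReal
  have step1 : ∀ ω, max ((μ {x | T < ξ (ω, x)}).toReal - a) 0
      ≤ ∫ x, w x * A.indicator 1 (ω, x) ∂μ := by
    intro ω
    have hsec : MeasurableSet (Prod.mk ω ⁻¹' A) := measurable_prodMk_left hA
    have hindm : Measurable fun x => A.indicator (1 : Ω × X → ℝ) (ω, x) :=
      (measurable_one.indicator hA).comp measurable_prodMk_left
    have hib : ∀ x, |A.indicator (1 : Ω × X → ℝ) (ω, x)| ≤ 1 := by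
      intro x; by_cases h : (ω, x) ∈ A <;> simp [Set.indicator, h]
    have hiint : Integrable (fun x => A.indicator (1 : Ω × X → ℝ) (ω, x)) μ :=
      bddInt μ hindm.aestronglyMeasurable hib
    have hdint' : Integrable d μ := bddInt μ hdm.aestronglyMeasurable hdb
    have h1 : (μ {x | T < ξ (ω, x)}).toReal = ∫ x, A.indicator 1 (ω, x) ∂μ := by
      have hseteq : {x | T < ξ (ω, x)} = Prod.mk ω ⁻¹' A := rfl
      rw [hseteq, ← measureReal_def, ← integral_indicator_one hsec]
      refine integral_congr_ae (Filter.Eventually.of_forall fun x => ?_)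
      by_cases h : (ω, x) ∈ A <;> simp [Set.indicator, h]
    have h2 : (μ {x | T < ξ (ω, x)}).toReal - a
        = ∫ x, (A.indicator 1 (ω, x) - d x) ∂μ := by
      rw [integral_sub hiint hdint', ← h1, hdint]
    rw [h2]
    refine max_le ?_ ?_
    · refine integral_mono (hiint.sub hdint') ?_ ?_
      · exact bddInt μ (hwm.mul hindm).aestronglyMeasurable
          (fun x => by rw [abs_mul]; exact mul_le_one₀ (hwb x) (abs_nonneg _) (hib x))
      · intro x
        simp only [hwdef]
        by_cases h : (ω, x) ∈ A
        · simp [Set.indicator, h]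
        · simp [Set.indicator, h]
          linarith [(hd01 x).1]
    · refine integral_nonneg fun x => ?_
      refine mul_nonneg (by simp only [hwdef]; linarith [(hd01 x).2]) ?_
      by_cases h : (ω, x) ∈ A <;> simp [Set.indicator, h]
  -- step 2+3 : integrate over ω and swap
  have hLint : Integrable (fun ω => max ((μ {x | T < ξ (ω, x)}).toReal - a) 0) ℙ := by
    have hm : Measurable fun ω => max ((μ {x | T < ξ (ω, x)}).toReal - a) 0 :=
      (hSm.sub measurable_const).max measurable_const
    refine bddInt ℙ hm.aestronglyMeasurable (C := 1) fun ω => ?_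
    rw [abs_le]
    constructor
    · have := le_max_right ((μ {x | T < ξ (ω, x)}).toReal - a) 0
      linarith
    · exact max_le (by linarith [hto1 {x | T < ξ (ω, x)}]) zero_le_one
  have hFint : Integrable (fun z : Ω × X => w z.2 * A.indicator 1 z) (ℙ.prod μ) := by
    refine bddInt _ ((hwm.comp measurable_snd).mul
      (measurable_one.indicator hA)).aestronglyMeasurable (C := 1) ?_
    rintro ⟨ω, x⟩
    rw [abs_mul]
    by_cases h : (ω, x) ∈ A
    · simp only [Set.indicator_of_mem h, Pi.one_apply, abs_one, mul_one]
      exact hwb x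
    · simp [Set.indicator_of_notMem h]
  have hJint : Integrable (fun ω => ∫ x, w x * A.indicator 1 (ω, x) ∂μ) ℙ :=
    hFint.integral_prod_left
  have step23 : ∫ ω, max ((μ {x | T < ξ (ω, x)}).toReal - a) 0 ∂ℙ ≤ ∫ x, w x * p x ∂μ := by
    refine le_trans (integral_mono hLint hJint step1) ?_
    rw [wSwap ℙ μ hA hwm hwb]
    refine le_of_eq (integral_congr_ae (Filter.Eventually.of_forall fun x => ?_))
    dsimp only
    rw [hp x]
    rfl
  -- step 4 : algebra
  have hmaxb : ∀ x, 0 ≤ max (p x - t) 0 ∧ max (p x - t) 0 ≤ 1 := fun x =>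
    ⟨le_max_right _ _, max_le (by linarith [hp1 x]) zero_le_one⟩
  have int1 : Integrable (fun x => p x - max (p x - t) 0) μ := by
    refine bddInt μ ((hpm.sub ((hpm.sub measurable_const).max
      measurable_const))).aestronglyMeasurable (C := 2) fun x => ?_
    rw [abs_le]
    exact ⟨by linarith [hp0 x, (hmaxb x).2], by linarith [hp1 x, (hmaxb x).1]⟩
  have int2 : Integrable (fun x => t * d x) μ := by
    refine bddInt μ (measurable_const.mul hdm).aestronglyMeasurable (C := 1) fun x => ?_
    rw [abs_mul]
    exact mul_le_one₀ (abs_le.2 ⟨by linarith, ht1⟩) (abs_nonneg _) (hdb x)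
  have step4 : ∫ x, w x * p x ∂μ = ∫ x, (p x - max (p x - t) 0) ∂μ - t * a := by
    have hptw : (fun x => w x * p x)
        = fun x => (p x - max (p x - t) 0) - t * d x := by
      funext x
      rw [← hdkey x]
      simp only [hwdef]
      ring
    rw [hptw, integral_sub int1 int2, integral_const_mul, hdint]
  -- step 5 : the R-side lower bound
  have sub5d : ∫ u in Set.Ico (0:ℝ) t, g u = ∫ x, min t (p x) ∂μ := by
    have hsw := secSwap (volume.restrict (Set.Ico (0:ℝ) t)) μ hA'
    rw [show (∫ u in Set.Ico (0:ℝ) t, g u)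
      = ∫ u in Set.Ico (0:ℝ) t, (μ (Prod.mk u ⁻¹' {z : ℝ × X | z.1 < p z.2})).toReal from rfl,
      hsw]
    refine integral_congr_ae (Filter.Eventually.of_forall fun x => ?_)
    dsimp only
    have h1 : (fun u : ℝ => (u, x)) ⁻¹' {z : ℝ × X | z.1 < p z.2} = Set.Iio (p x) := rfl
    rw [h1, Measure.restrict_apply measurableSet_Iio]
    have h2 : Set.Iio (p x) ∩ Set.Ico 0 t = Set.Ico 0 (min (p x) t) := by
      ext u
      simp only [Set.mem_inter_iff, Set.mem_Iio, Set.mem_Ico, lt_min_iff]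
      tauto
    rw [h2, Real.volume_Ico]
    rw [ENNReal.toReal_ofReal (by simp [le_min (hp0 x) ht0])]
    simp [min_comm]
  have intg : IntegrableOn g (Set.Ico (0:ℝ) t) := by
    refine bddInt _ hgm.aestronglyMeasurable (C := 1) fun u => ?_
    rw [abs_of_nonneg ENNReal.toReal_nonneg]
    exact hto1 _
  have intgIcc : IntegrableOn (fun u => max (g u - a) 0) (Set.Icc (0:ℝ) 1) := by
    refine bddInt _ ((hgm.sub measurable_const).max
      measurable_const).aestronglyMeasurable (C := 1) fun u => ?_
    rw [abs_le]
    constructor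
    · have := le_max_right (g u - a) 0
      linarith
    · exact max_le (by linarith [hto1 {x | u < p x}]) zero_le_one
  have intgIco : IntegrableOn (fun u => max (g u - a) 0) (Set.Ico (0:ℝ) t) := by
    refine bddInt _ ((hgm.sub measurable_const).max
      measurable_const).aestronglyMeasurable (C := 1) fun u => ?_
    rw [abs_le]
    constructor
    · have := le_max_right (g u - a) 0
      linarith
    · exact max_le (by linarith [hto1 {x | u < p x}]) zero_le_one
  have sub5c : ∫ x, (p x - max (p x - t) 0) ∂μ - t * a
      = ∫ u in Set.Ico (0:ℝ) t, (g u - a) := by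
    have h1 : ∫ x, (p x - max (p x - t) 0) ∂μ = ∫ u in Set.Ico (0:ℝ) t, g u := by
      rw [sub5d]
      refine integral_congr_ae (Filter.Eventually.of_forall fun x => ?_)
      exact minmax t (p x)
    rw [integral_sub intg (integrableOn_const (by rw [Real.volume_Ico]; exact ENNReal.ofReal_ne_top))]
    rw [← h1, setIntegral_const]
    rw [measureReal_def, Real.volume_Ico, ENNReal.toReal_ofReal (by linarith)]
    simp only [smul_eq_mul]
    ring
  have sub5e : ∫ u in Set.Ico (0:ℝ) t, (g u - a) ≤ ∫ u in Set.Ico (0:ℝ) t, max (g u - a) 0 := by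
    refine integral_mono (intg.sub (integrableOn_const (by rw [Real.volume_Ico]; exact ENNReal.ofReal_ne_top))) intgIco
      fun u => le_max_left _ _
  have sub5f : ∫ u in Set.Ico (0:ℝ) t, max (g u - a) 0
      ≤ ∫ u in Set.Icc (0:ℝ) 1, max (g u - a) 0 := by
    refine setIntegral_mono_set intgIcc
      (Filter.Eventually.of_forall fun u => le_max_right _ _) ?_
    refine Filter.Eventually.of_forall ?_
    intro u hu
    exact ⟨hu.1, le_trans hu.2.le ht1⟩
  calc ∫ ω, max ((μ {x | T < ξ (ω, x)}).toReal - a) 0 ∂ℙ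
      ≤ ∫ x, w x * p x ∂μ := step23
    _ = ∫ x, (p x - max (p x - t) 0) ∂μ - t * a := step4
    _ = ∫ u in Set.Ico (0:ℝ) t, (g u - a) := sub5c
    _ ≤ ∫ u in Set.Ico (0:ℝ) t, max (g u - a) 0 := sub5e
    _ ≤ ∫ u in Set.Icc (0:ℝ) 1, max (g u - a) 0 := sub5f

lemma meanEq (ξ : Ω × X → ℝ) (hξ : Measurable ξ) (T : ℝ)
    (p : X → ℝ) (hp : ∀ x, p x = (ℙ {ω | T < ξ (ω, x)}).toReal) :
    ∫ ω, (μ {x | T < ξ (ω, x)}).toReal ∂ℙ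
      = ∫ u in Set.Icc (0:ℝ) 1, (μ {x | u < p x}).toReal := by
  have hA : MeasurableSet {z : Ω × X | T < ξ z} := measurableSet_lt measurable_const hξ
  have hpeq : p = fun x => (ℙ ((fun ω => (ω, x)) ⁻¹' {z : Ω × X | T < ξ z})).toReal := funext hp
  have hpm : Measurable p := by
    rw [hpeq]; exact (measurable_measure_prodMk_right hA).ennreal_toReal
  have hto1' : ∀ (s : Set Ω), (ℙ s).toReal ≤ 1 := fun s => by
    simpa using ENNReal.toReal_mono (by norm_num) (prob_le_one (μ := ℙ) (s := s))
  have hp0 : ∀ x, 0 ≤ p x := fun x => by rw [hp x]; exact ENNReal.toReal_nonneg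
  have hp1 : ∀ x, p x ≤ 1 := fun x => by rw [hp x]; exact hto1' _
  have hA' : MeasurableSet {z : ℝ × X | z.1 < p z.2} :=
    measurableSet_lt measurable_fst (hpm.comp measurable_snd)
  haveI hfin1 : IsFiniteMeasure (volume.restrict (Set.Icc (0:ℝ) 1)) := by
    constructor
    rw [Measure.restrict_apply_univ, Real.volume_Icc]
    exact ENNReal.ofReal_lt_top
  have h1 := secSwap ℙ μ hA
  have h2 := secSwap (volume.restrict (Set.Icc (0:ℝ) 1)) μ hA'
  calc ∫ ω, (μ {x | T < ξ (ω, x)}).toReal ∂ℙ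
      = ∫ x, (ℙ ((fun ω => (ω, x)) ⁻¹' {z : Ω × X | T < ξ z})).toReal ∂μ := h1
    _ = ∫ x, ((volume.restrict (Set.Icc (0:ℝ) 1))
          ((fun u => (u, x)) ⁻¹' {z : ℝ × X | z.1 < p z.2})).toReal ∂μ := by
        refine integral_congr_ae (Filter.Eventually.of_forall fun x => ?_)
        dsimp only
        have h3 : (fun u : ℝ => (u, x)) ⁻¹' {z : ℝ × X | z.1 < p z.2} = Set.Iio (p x) := rfl
        rw [h3, Measure.restrict_apply measurableSet_Iio]
        have h4 : Set.Iio (p x) ∩ Set.Icc 0 1 = Set.Ico 0 (p x) := by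
          ext u
          simp only [Set.mem_inter_iff, Set.mem_Iio, Set.mem_Icc, Set.mem_Ico]
          constructor
          · rintro ⟨hu1, hu2, hu3⟩
            exact ⟨hu2, hu1⟩
          · rintro ⟨hu1, hu2⟩
            exact ⟨hu2, hu1, by linarith [hp1 x]⟩
        rw [h4, Real.volume_Ico, ENNReal.toReal_ofReal (by linarith [hp0 x])]
        rw [hp x]
        norm_num
    _ = ∫ u in Set.Icc (0:ℝ) 1, (μ {x | u < p x}).toReal := h2.symm
end SL

noncomputable def slopeF (φ : ℝ → ℝ) (N : ℕ) (j : ℕ) : ℝ := N * (φ ((j+1)/N) - φ (j/N))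

noncomputable def coefF (φ : ℝ → ℝ) (N : ℕ) : ℕ → ℝ
  | 0 => slopeF φ N 0
  | (j+1) => slopeF φ N (j+1) - slopeF φ N j

lemma sum_coef (φ : ℝ → ℝ) {N : ℕ} (hN : 0 < N) (k : ℕ) (x : ℝ) :
    φ 0 + ∑ j ∈ Finset.range (k+1), coefF φ N j * (x - j/N)
      = φ (k/N) + slopeF φ N k * (x - k/N) := by
  have hN' : (N:ℝ) ≠ 0 := Nat.cast_ne_zero.2 hN.ne'
  induction k with
  | zero =>
    simp [coefF, slopeF]
  | succ k ih =>
    rw [Finset.sum_range_succ, ← add_assoc, ih]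
    show φ (↑k / ↑N) + slopeF φ N k * (x - ↑k / ↑N)
        + (slopeF φ N (k+1) - slopeF φ N k) * (x - (↑(k+1)) / ↑N) = _
    simp only [slopeF]
    push_cast
    field_simp
    ring

lemma interval_eval (φ : ℝ → ℝ) {N : ℕ} (hN : 0 < N) {k : ℕ} {x : ℝ} (hk : k < N)
    (h1 : (k:ℝ)/N ≤ x) (h2 : x ≤ ((k:ℝ)+1)/N) :
    φ 0 + ∑ j ∈ Finset.range N, coefF φ N j * max (x - j/N) 0
      = φ (k/N) + slopeF φ N k * (x - k/N) := by
  have hN' : (0:ℝ) < N := Nat.cast_pos.2 hN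
  have hs : ∑ j ∈ Finset.range N, coefF φ N j * max (x - j/N) 0
      = ∑ j ∈ Finset.range (k+1), coefF φ N j * max (x - j/N) 0 := by
    refine (Finset.sum_subset (Finset.range_subset_range.2 hk) fun j hj hj' => ?_).symm
    have hjk : k + 1 ≤ j := by
      simp only [Finset.mem_range, not_lt] at hj'
      exact hj'
    have : x ≤ (j:ℝ)/N := by
      refine le_trans h2 ?_
      rw [div_le_div_iff_of_pos_right hN']
      exact_mod_cast hjk
    rw [max_eq_right (by linarith), mul_zero]
  have hs2 : ∑ j ∈ Finset.range (k+1), coefF φ N j * max (x - j/N) 0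
      = ∑ j ∈ Finset.range (k+1), coefF φ N j * (x - j/N) := by
    refine Finset.sum_congr rfl fun j hj => ?_
    have hjk : j ≤ k := Nat.lt_succ_iff.1 (Finset.mem_range.1 hj)
    have : (j:ℝ)/N ≤ x := by
      refine le_trans ?_ h1
      rw [div_le_div_iff_of_pos_right hN']
      exact_mod_cast hjk
    rw [max_eq_left (by linarith)]
  rw [hs, hs2, sum_coef φ hN]

lemma combo (φ : ℝ → ℝ) {N : ℕ} (hN : 0 < N) (k : ℕ) (x : ℝ) :
    φ (k/N) + slopeF φ N k * (x - k/N)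
      = (((k:ℝ)+1) - N*x) * φ (k/N) + (N*x - k) * φ (((k:ℝ)+1)/N) := by
  have hN' : (N:ℝ) ≠ 0 := Nat.cast_ne_zero.2 hN.ne'
  simp only [slopeF]
  field_simp
  ring

lemma coef_nonneg {φ : ℝ → ℝ} (hφ : ConvexOn ℝ Set.univ φ) {N : ℕ} (hN : 0 < N) (j : ℕ) :
    0 ≤ coefF φ N (j+1) := by
  have hN' : (0:ℝ) < N := Nat.cast_pos.2 hN
  have h := hφ.2 (Set.mem_univ ((j:ℝ)/N)) (Set.mem_univ (((j:ℝ)+2)/N))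
    (by norm_num : (0:ℝ) ≤ 1/2) (by norm_num : (0:ℝ) ≤ 1/2) (by norm_num)
  have hpt : (1/2 : ℝ) • ((j:ℝ)/N) + (1/2 : ℝ) • (((j:ℝ)+2)/N) = ((j:ℝ)+1)/N := by
    simp only [smul_eq_mul]
    field_simp
    ring
  rw [hpt] at h
  simp only [smul_eq_mul] at h
  show 0 ≤ slopeF φ N (j+1) - slopeF φ N j
  simp only [slopeF]
  push_cast
  have h2 : φ (((j:ℝ)+1)/N) ≤ 1/2 * φ ((j:ℝ)/N) + 1/2 * φ (((j:ℝ)+2)/N) := h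
  have e : ((j:ℝ)+1+1)/N = ((j:ℝ)+2)/N := by ring
  rw [e]
  nlinarith

lemma chordB {φ : ℝ → ℝ} (hφ : ConvexOn ℝ Set.univ φ) {N : ℕ} (hN : 0 < N) {k : ℕ} {x : ℝ}
    (h1 : (k:ℝ)/N ≤ x) (h2 : x ≤ ((k:ℝ)+1)/N) :
    φ x ≤ φ (k/N) + slopeF φ N k * (x - k/N) := by
  have hN' : (0:ℝ) < N := Nat.cast_pos.2 hN
  set lam : ℝ := ((k:ℝ)+1) - N*x with hlam
  have hl0 : 0 ≤ lam := by
    rw [hlam]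
    rw [le_div_iff₀ hN'] at h2
    nlinarith
  have hl1 : 0 ≤ 1 - lam := by
    rw [hlam]
    rw [div_le_iff₀ hN'] at h1
    nlinarith
  have h := hφ.2 (Set.mem_univ ((k:ℝ)/N)) (Set.mem_univ (((k:ℝ)+1)/N)) hl0 hl1 (by ring)
  have hpt : lam • ((k:ℝ)/N) + (1 - lam) • (((k:ℝ)+1)/N) = x := by
    rw [hlam]
    simp only [smul_eq_mul]
    field_simp
    ring
  rw [hpt] at h
  simp only [smul_eq_mul] at h
  rw [combo φ hN]
  calc φ x ≤ lam * φ ((k:ℝ)/N) + (1-lam) * φ (((k:ℝ)+1)/N) := h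
    _ = (((k:ℝ)+1) - N*x) * φ (↑k/↑N) + (N*x - k) * φ ((↑k+1)/↑N) := by rw [hlam]; ring

lemma exists_interval {N : ℕ} (hN : 0 < N) {x : ℝ} (hx0 : 0 ≤ x) (hx1 : x ≤ 1) :
    ∃ k : ℕ, k < N ∧ (k:ℝ)/N ≤ x ∧ x ≤ ((k:ℝ)+1)/N := by
  have hN' : (0:ℝ) < N := Nat.cast_pos.2 hN
  refine ⟨min (⌊x * N⌋₊) (N-1), ?_, ?_, ?_⟩
  · exact lt_of_le_of_lt (min_le_right _ _) (by omega)
  · rw [div_le_iff₀ hN']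
    refine le_trans ?_ (Nat.floor_le (by positivity))
    exact_mod_cast min_le_left _ _
  · rcases le_or_gt (⌊x * N⌋₊) (N-1) with h | h
    · rw [min_eq_left h, le_div_iff₀ hN']
      have := Nat.lt_floor_add_one (x * N)
      push_cast at this ⊢
      linarith
    · rw [min_eq_right h.le, le_div_iff₀ hN']
      have hcast : ((N - 1 : ℕ) : ℝ) + 1 = N := by
        have : 1 ≤ N := hN
        push_cast [Nat.cast_sub this]
        ring
      rw [hcast]
      nlinarith


theorem stmt_4
    {Ω Ω' X : Type*} [MeasurableSpace Ω] [MeasurableSpace Ω'] [MeasurableSpace X]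
    (ℙ : Measure Ω) [IsProbabilityMeasure ℙ]
    (ℙ' : Measure Ω') [IsProbabilityMeasure ℙ']
    (μ : Measure X) [IsProbabilityMeasure μ]
    (ξ : Ω × X → ℝ) (hξ : Measurable ξ) (T : ℝ)
    (U : Ω' → ℝ) (hUm : Measurable U)
    (hU : Measure.map U ℙ' = volume.restrict (Set.Icc (0:ℝ) 1))
    (S : Ω → ℝ) (hS : ∀ ω, S ω = (μ {x | T < ξ (ω, x)}).toReal)
    (p : X → ℝ) (hp : ∀ x, p x = (ℙ {ω | T < ξ (ω, x)}).toReal)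
    (R : Ω' → ℝ) (hR : ∀ ω, R ω = (μ {x | U ω < p x}).toReal)
    (φ : ℝ → ℝ) (hφ : ConvexOn ℝ Set.univ φ)
    (hφS : Integrable (fun ω => φ (S ω)) ℙ)
    (hφR : Integrable (fun ω => φ (R ω)) ℙ') :
    ∫ ω, φ (S ω) ∂ℙ ≤ ∫ ω, φ (R ω) ∂ℙ' := by
  classical
  have hA : MeasurableSet {z : Ω × X | T < ξ z} := measurableSet_lt measurable_const hξ
  have hpeq : p = fun x => (ℙ ((fun ω => (ω, x)) ⁻¹' {z : Ω × X | T < ξ z})).toReal := funext hp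
  have hpm : Measurable p := by
    rw [hpeq]; exact (measurable_measure_prodMk_right hA).ennreal_toReal
  have hto1 : ∀ (s : Set X), (μ s).toReal ≤ 1 := fun s => by
    simpa using ENNReal.toReal_mono (by norm_num) (prob_le_one (μ := μ) (s := s))
  have hA' : MeasurableSet {z : ℝ × X | z.1 < p z.2} :=
    measurableSet_lt measurable_fst (hpm.comp measurable_snd)
  set g : ℝ → ℝ := fun u => (μ {x | u < p x}).toReal with hgdef
  have hgm : Measurable g := (measurable_measure_prodMk_left hA').ennreal_toReal
  have hSfun : S = fun ω => (μ (Prod.mk ω ⁻¹' {z : Ω × X | T < ξ z})).toReal := funext hS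
  have hSmeas : Measurable S := by
    rw [hSfun]; exact (measurable_measure_prodMk_left hA).ennreal_toReal
  have hRfun : R = fun ω => g (U ω) := funext fun ω => hR ω
  have hRmeas : Measurable R := by rw [hRfun]; exact hgm.comp hUm
  have hS01 : ∀ ω, 0 ≤ S ω ∧ S ω ≤ 1 := fun ω => by
    rw [hS ω]; exact ⟨ENNReal.toReal_nonneg, hto1 _⟩
  have hR01 : ∀ ω, 0 ≤ R ω ∧ R ω ≤ 1 := fun ω => by
    rw [hR ω]; exact ⟨ENNReal.toReal_nonneg, hto1 _⟩
  haveI hfin1 : IsFiniteMeasure (volume.restrict (Set.Icc (0:ℝ) 1)) := by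
    constructor
    rw [Measure.restrict_apply_univ, Real.volume_Icc]
    exact ENNReal.ofReal_lt_top
  -- representation of the R-side integrals
  have hIR : ∀ a : ℝ, ∫ ω, max (R ω - a) 0 ∂ℙ'
      = ∫ u in Set.Icc (0:ℝ) 1, max (g u - a) 0 := by
    intro a
    have hfm : AEStronglyMeasurable (fun u => max (g u - a) 0) (Measure.map U ℙ') :=
      ((hgm.sub measurable_const).max measurable_const).aestronglyMeasurable
    rw [hRfun, ← hU, integral_map hUm.aemeasurable hfm]
  -- stop-loss inequalities
  have hSL : ∀ a : ℝ, 0 ≤ a → a ≤ 1 →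
      ∫ ω, max (S ω - a) 0 ∂ℙ ≤ ∫ ω, max (R ω - a) 0 ∂ℙ' := by
    intro a ha0 ha1
    rw [hIR a]
    have h1 : (fun ω => max (S ω - a) 0)
        = fun ω => max ((μ {x | T < ξ (ω, x)}).toReal - a) 0 := by
      funext ω; rw [hS ω]
    rw [h1]
    exact stopLoss ℙ μ ξ hξ T p hp ha0 ha1
  -- equality of means
  have hmean : ∫ ω, S ω ∂ℙ = ∫ ω, R ω ∂ℙ' := by
    have h2 : ∫ ω, R ω ∂ℙ' = ∫ u in Set.Icc (0:ℝ) 1, g u := by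
      rw [hRfun, ← hU, integral_map hUm.aemeasurable hgm.aestronglyMeasurable]
    rw [h2, hSfun]
    exact meanEq ℙ μ ξ hξ T p hp
  have hI0 : ∀ z : ℝ, z = 0 →
      ∫ ω, max (S ω - z) 0 ∂ℙ = ∫ ω, max (R ω - z) 0 ∂ℙ' := by
    intro z hz
    subst hz
    have e1 : (fun ω => max (S ω - 0) 0) = S := by
      funext ω; rw [sub_zero, max_eq_left (hS01 ω).1]
    have e2 : (fun ω => max (R ω - 0) 0) = R := by
      funext ω; rw [sub_zero, max_eq_left (hR01 ω).1]
    rw [e1, e2, hmean]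
  -- integrability of stop-loss integrands
  have hIntS : ∀ a : ℝ, Integrable (fun ω => max (S ω - a) 0) ℙ := by
    intro a
    refine bddInt ℙ ((hSmeas.sub measurable_const).max
      measurable_const).aestronglyMeasurable (C := 1 + |a|) fun ω => ?_
    rw [abs_le]
    constructor
    · have h := le_max_right (S ω - a) 0
      have := abs_nonneg a
      linarith
    · refine max_le ?_ (by positivity)
      have := neg_abs_le a
      linarith [(hS01 ω).2]
  have hIntR : ∀ a : ℝ, Integrable (fun ω => max (R ω - a) 0) ℙ' := by
    intro a
    refine bddInt ℙ' ((hRmeas.sub measurable_const).max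
      measurable_const).aestronglyMeasurable (C := 1 + |a|) fun ω => ?_
    rw [abs_le]
    constructor
    · have h := le_max_right (R ω - a) 0
      have := abs_nonneg a
      linarith
    · refine max_le ?_ (by positivity)
      have := neg_abs_le a
      linarith [(hR01 ω).2]
  -- the ε-approximation argument
  refine le_of_forall_pos_le_add fun ε hε => ?_
  have hcont : Continuous φ := by
    rw [← continuousOn_univ]
    exact ConvexOn.continuousOn isOpen_univ hφ
  obtain ⟨δ, hδ0, hδ⟩ := Metric.uniformContinuousOn_iff.1
    ((isCompact_Icc (a := (0:ℝ)) (b := 1)).uniformContinuousOn_of_continuous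
      hcont.continuousOn) ε hε
  obtain ⟨n0, hn0⟩ := exists_nat_one_div_lt hδ0
  set N := n0 + 1 with hNdef
  have hN : 0 < N := Nat.succ_pos n0
  have hNr : (0:ℝ) < N := by exact_mod_cast hN
  have h1N : 1/(N:ℝ) < δ := by
    rw [hNdef]
    push_cast
    exact hn0
  -- pointwise bounds
  have key1 : ∀ x : ℝ, 0 ≤ x → x ≤ 1 →
      φ x ≤ φ 0 + ∑ j ∈ Finset.range N, coefF φ N j * max (x - j/N) 0 := by
    intro x hx0 hx1
    obtain ⟨k, hk, hk1, hk2⟩ := exists_interval hN hx0 hx1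
    rw [interval_eval φ hN hk hk1 hk2]
    exact chordB hφ hN hk1 hk2
  have key2 : ∀ x : ℝ, 0 ≤ x → x ≤ 1 →
      φ 0 + ∑ j ∈ Finset.range N, coefF φ N j * max (x - j/N) 0 ≤ φ x + ε := by
    intro x hx0 hx1
    obtain ⟨k, hk, hk1, hk2⟩ := exists_interval hN hx0 hx1
    rw [interval_eval φ hN hk hk1 hk2, combo φ hN]
    have hkN : (k:ℝ)/N ∈ Set.Icc (0:ℝ) 1 := by
      constructor
      · positivity
      · rw [div_le_one hNr]
        exact_mod_cast hk.le
    have hk1N : ((k:ℝ)+1)/N ∈ Set.Icc (0:ℝ) 1 := by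
      constructor
      · positivity
      · rw [div_le_one hNr]
        exact_mod_cast Nat.succ_le_of_lt hk
    have hxI : x ∈ Set.Icc (0:ℝ) 1 := ⟨hx0, hx1⟩
    have he : ((k:ℝ)+1)/N = (k:ℝ)/N + 1/N := by ring
    have hk2' : x ≤ (k:ℝ)/N + 1/N := by rw [← he]; exact hk2
    have hd1 : dist ((k:ℝ)/N) x < δ := by
      rw [Real.dist_eq, abs_lt]
      constructor <;> [linarith; linarith [h1N]]
    have hd2 : dist (((k:ℝ)+1)/N) x < δ := by
      rw [Real.dist_eq, abs_lt, he]
      constructor <;> [linarith; linarith [h1N, one_div_pos.2 hNr]]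
    have hb1 : φ ((k:ℝ)/N) < φ x + ε := by
      have h := hδ _ hkN _ hxI hd1
      rw [Real.dist_eq] at h
      linarith [(abs_lt.1 h).2]
    have hb2 : φ (((k:ℝ)+1)/N) < φ x + ε := by
      have h := hδ _ hk1N _ hxI hd2
      rw [Real.dist_eq] at h
      linarith [(abs_lt.1 h).2]
    have hl0 : 0 ≤ ((k:ℝ)+1) - N*x := by
      rw [le_div_iff₀ hNr] at hk2
      nlinarith
    have hl1' : 0 ≤ (N:ℝ)*x - k := by
      rw [div_le_iff₀ hNr] at hk1
      nlinarith
    calc (((k:ℝ)+1) - N*x) * φ (↑k/↑N) + ((N:ℝ)*x - k) * φ ((↑k+1)/↑N)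
        ≤ (((k:ℝ)+1) - N*x) * (φ x + ε) + ((N:ℝ)*x - k) * (φ x + ε) :=
          add_le_add (mul_le_mul_of_nonneg_left hb1.le hl0)
            (mul_le_mul_of_nonneg_left hb2.le hl1')
      _ = φ x + ε := by ring
  -- integral evaluations of the piecewise linear function
  have hψSint : Integrable
      (fun ω => φ 0 + ∑ j ∈ Finset.range N, coefF φ N j * max (S ω - j/N) 0) ℙ :=
    (integrable_const _).add (integrable_finset_sum _ fun j _ => (hIntS ((j:ℝ)/N)).const_mul _)
  have hψRint : Integrable
      (fun ω => φ 0 + ∑ j ∈ Finset.range N, coefF φ N j * max (R ω - j/N) 0) ℙ' :=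
    (integrable_const _).add (integrable_finset_sum _ fun j _ => (hIntR ((j:ℝ)/N)).const_mul _)
  have hψS : ∫ ω, (φ 0 + ∑ j ∈ Finset.range N, coefF φ N j * max (S ω - j/N) 0) ∂ℙ
      = φ 0 + ∑ j ∈ Finset.range N, coefF φ N j * ∫ ω, max (S ω - j/N) 0 ∂ℙ := by
    rw [integral_add (integrable_const (φ 0))
      (integrable_finset_sum (Finset.range N)
        fun j _ => (hIntS ((j:ℝ)/N)).const_mul (coefF φ N j)), integral_const]
    simp only [probReal_univ, one_smul]
    congr 1
    rw [integral_finset_sum (Finset.range N)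
      fun j _ => (hIntS ((j:ℝ)/N)).const_mul (coefF φ N j)]
    exact Finset.sum_congr rfl fun j _ => integral_const_mul _ _
  have hψR : ∫ ω, (φ 0 + ∑ j ∈ Finset.range N, coefF φ N j * max (R ω - j/N) 0) ∂ℙ'
      = φ 0 + ∑ j ∈ Finset.range N, coefF φ N j * ∫ ω, max (R ω - j/N) 0 ∂ℙ' := by
    rw [integral_add (integrable_const (φ 0))
      (integrable_finset_sum (Finset.range N)
        fun j _ => (hIntR ((j:ℝ)/N)).const_mul (coefF φ N j)), integral_const]
    simp only [probReal_univ, one_smul]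
    congr 1
    rw [integral_finset_sum (Finset.range N)
      fun j _ => (hIntR ((j:ℝ)/N)).const_mul (coefF φ N j)]
    exact Finset.sum_congr rfl fun j _ => integral_const_mul _ _
  -- comparison of the sums
  have hsums : ∑ j ∈ Finset.range N, coefF φ N j * ∫ ω, max (S ω - j/N) 0 ∂ℙ
      ≤ ∑ j ∈ Finset.range N, coefF φ N j * ∫ ω, max (R ω - j/N) 0 ∂ℙ' := by
    rw [hNdef, Finset.sum_range_succ', Finset.sum_range_succ']
    refine add_le_add (Finset.sum_le_sum fun i hi => ?_) ?_
    · refine mul_le_mul_of_nonneg_left ?_ (coef_nonneg hφ (Nat.succ_pos n0) i)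
      refine hSL _ (by positivity) ?_
      rw [div_le_one (by exact_mod_cast Nat.succ_pos n0)]
      have : i < n0 := Finset.mem_range.1 hi
      exact_mod_cast by omega
    · refine le_of_eq ?_
      congr 1
      exact hI0 _ (by simp)
  -- final chain
  calc ∫ ω, φ (S ω) ∂ℙ
      ≤ ∫ ω, (φ 0 + ∑ j ∈ Finset.range N, coefF φ N j * max (S ω - j/N) 0) ∂ℙ :=
        integral_mono hφS hψSint (fun ω => key1 (S ω) (hS01 ω).1 (hS01 ω).2)
    _ = φ 0 + ∑ j ∈ Finset.range N, coefF φ N j * ∫ ω, max (S ω - j/N) 0 ∂ℙ := hψS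
    _ ≤ φ 0 + ∑ j ∈ Finset.range N, coefF φ N j * ∫ ω, max (R ω - j/N) 0 ∂ℙ' :=
        add_le_add_right hsums _
    _ = ∫ ω, (φ 0 + ∑ j ∈ Finset.range N, coefF φ N j * max (R ω - j/N) 0) ∂ℙ' := hψR.symm
    _ ≤ ∫ ω, (φ (R ω) + ε) ∂ℙ' :=
        integral_mono hψRint (hφR.add (integrable_const _))
          (fun ω => key2 (R ω) (hR01 ω).1 (hR01 ω).2)
    _ = ∫ ω, φ (R ω) ∂ℙ' + ε := by
        rw [integral_add hφR (integrable_const _), integral_const]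
        simp [measure_univ]
end

section
/- Let p : X → [0,1] be measurable on a probability space (X, P_X), U uniform on [0,1], and R = ∫_X 1_{p(x) > U} P_X(dx). Then the quantile function of R satisfies F_R^{-1}(α) = ∫_X 1_{p(x) > 1−α} P_X(dx) for all α ∈ [0,1]. -/
open MeasureTheory

theorem stmt_7
    {Ω X : Type*} [MeasurableSpace Ω] [MeasurableSpace X]
    (ℙ : Measure Ω) [IsProbabilityMeasure ℙ]
    (μ : Measure X) [IsProbabilityMeasure μ]
    (p : X → ℝ) (hpm : Measurable p) (hp01 : ∀ x, p x ∈ Set.Icc (0:ℝ) 1)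
    (U : Ω → ℝ) (hUm : Measurable U)
    (hU : Measure.map U ℙ = volume.restrict (Set.Icc (0:ℝ) 1))
    (R : Ω → ℝ) (hR : ∀ ω, R ω = (μ {x | U ω < p x}).toReal) :
    ∀ α ∈ Set.Icc (0:ℝ) 1,
      sInf {t : ℝ | α ≤ (ℙ {ω | R ω ≤ t}).toReal}
        = (μ {x | 1 - α < p x}).toReal := by
  intro α hα
  obtain ⟨hα0, hα1⟩ := hα
  -- the survival function of p
  set g : ℝ → ℝ := fun u => (μ {x | u < p x}).toReal with hgdef
  have hganti : Antitone g := by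
    intro u v huv
    exact ENNReal.toReal_mono (measure_ne_top μ _)
      (measure_mono (fun x hx => lt_of_le_of_lt huv hx))
  have hRg : ∀ ω, R ω = g (U ω) := hR
  -- distribution of U: upper tails
  have hU_ge : ∀ d : ℝ, 0 ≤ d → ℙ {ω | d ≤ U ω} = ENNReal.ofReal (1 - d) := by
    intro d hd
    have h1 : {ω | d ≤ U ω} = U ⁻¹' (Set.Ici d) := rfl
    rw [h1, ← Measure.map_apply hUm measurableSet_Ici, hU,
        Measure.restrict_apply measurableSet_Ici]
    have h2 : Set.Ici d ∩ Set.Icc 0 1 = Set.Icc d 1 := by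
      ext u
      simp only [Set.mem_inter_iff, Set.mem_Ici, Set.mem_Icc]
      constructor
      · rintro ⟨h1', _, h3'⟩; exact ⟨h1', h3'⟩
      · rintro ⟨h1', h2'⟩; exact ⟨h1', le_trans hd h1', h2'⟩
    rw [h2, Real.volume_Icc]
  have hU_gt : ∀ d : ℝ, 0 ≤ d → ℙ {ω | d < U ω} = ENNReal.ofReal (1 - d) := by
    intro d hd
    have h1 : {ω | d < U ω} = U ⁻¹' (Set.Ioi d) := rfl
    rw [h1, ← Measure.map_apply hUm measurableSet_Ioi, hU,
        Measure.restrict_apply measurableSet_Ioi]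
    have h2 : Set.Ioi d ∩ Set.Icc 0 1 = Set.Ioc d 1 := by
      ext u
      simp only [Set.mem_inter_iff, Set.mem_Ioi, Set.mem_Ioc]
      constructor
      · rintro ⟨h1', _, h3'⟩; exact ⟨h1', h3'⟩
      · rintro ⟨h1', h2'⟩; exact ⟨h1', le_of_lt (lt_of_le_of_lt hd h1'), h2'⟩
    rw [h2, Real.volume_Ioc]
  rcases eq_or_lt_of_le hα0 with h0 | hαpos
  · -- α = 0 case
    have hset : {t : ℝ | α ≤ (ℙ {ω | R ω ≤ t}).toReal} = Set.univ := by
      ext t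
      simp only [Set.mem_setOf_eq, Set.mem_univ, iff_true]
      rw [← h0]
      exact ENNReal.toReal_nonneg
    have hempty : {x | 1 - α < p x} = ∅ := by
      ext x
      simp only [Set.mem_setOf_eq, Set.mem_empty_iff_false, iff_false, not_lt, ← h0]
      simpa using (hp01 x).2
    rw [hset, hempty, measure_empty]
    have hnb : ¬ BddBelow (Set.univ : Set ℝ) := by
      rintro ⟨b, hb⟩
      have := hb (Set.mem_univ (b - 1))
      linarith
    rw [csInf_of_not_bddBelow hnb, Real.sInf_empty]
    simp
  · -- α > 0 case
    set c : ℝ := 1 - α with hc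
    have hc0 : 0 ≤ c := by simp [hc]; linarith
    have key : ∀ t : ℝ, (α ≤ (ℙ {ω | R ω ≤ t}).toReal) ↔ g c ≤ t := by
      intro t
      constructor
      · intro h
        by_contra hlt
        push_neg at hlt
        have ht0 : 0 ≤ t := by
          by_contra h'
          push_neg at h'
          have hemp : {ω | R ω ≤ t} = ∅ := by
            ext ω
            simp only [Set.mem_setOf_eq, Set.mem_empty_iff_false, iff_false, not_le]
            calc t < 0 := h'
              _ ≤ R ω := by rw [hR]; exact ENNReal.toReal_nonneg
          rw [hemp, measure_empty] at h
          simp at h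
          linarith
        have h1 : ENNReal.ofReal t < μ {x | c < p x} :=
          (ENNReal.ofReal_lt_iff_lt_toReal ht0 (measure_ne_top μ _)).2 hlt
        have hun : {x | c < p x} = ⋃ n : ℕ, {x | c + 1/((n:ℝ)+1) < p x} := by
          ext x
          simp only [Set.mem_setOf_eq, Set.mem_iUnion]
          constructor
          · intro hx
            obtain ⟨n, hn⟩ := exists_nat_one_div_lt (sub_pos.2 hx)
            exact ⟨n, by push_cast at hn ⊢; linarith⟩
          · rintro ⟨n, hn⟩
            have : (0:ℝ) < 1/((n:ℝ)+1) := by positivity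
            linarith
        have hmono : Monotone (fun n : ℕ => {x | c + 1/((n:ℝ)+1) < p x}) := by
          intro n m hnm x hx
          simp only [Set.mem_setOf_eq] at hx ⊢
          have h1' : 1/((m:ℝ)+1) ≤ 1/((n:ℝ)+1) := by
            apply one_div_le_one_div_of_le
            · positivity
            · exact_mod_cast by exact_mod_cast add_le_add_left (Nat.cast_le.2 hnm) 1
          linarith
        rw [hun, hmono.directed_le.measure_iUnion] at h1
        obtain ⟨n, hn⟩ := lt_iSup_iff.1 h1
        set ε : ℝ := 1/((n:ℝ)+1) with hε
        have hεpos : 0 < ε := by positivity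
        have htg : t < g (c + ε) :=
          (ENNReal.ofReal_lt_iff_lt_toReal ht0 (measure_ne_top μ _)).1 hn
        have hsub : {ω | R ω ≤ t} ⊆ {ω | c + ε < U ω} := by
          intro ω hω
          simp only [Set.mem_setOf_eq] at hω ⊢
          by_contra h'
          push_neg at h'
          rw [hRg] at hω
          have := hganti h'
          linarith
        have hle : (ℙ {ω | R ω ≤ t}).toReal ≤ (ℙ {ω | c + ε < U ω}).toReal :=
          ENNReal.toReal_mono (measure_ne_top ℙ _) (measure_mono hsub)
        rw [hU_gt (c + ε) (by linarith)] at hle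
        rcases le_or_gt 0 (1 - (c + ε)) with hs | hs
        · rw [ENNReal.toReal_ofReal hs] at hle
          have : α = 1 - c := by rw [hc]; ring
          linarith
        · rw [ENNReal.ofReal_eq_zero.2 (le_of_lt hs)] at hle
          simp at hle
          linarith
      · intro h
        have hsub : {ω | c ≤ U ω} ⊆ {ω | R ω ≤ t} := by
          intro ω hω
          simp only [Set.mem_setOf_eq] at hω ⊢
          rw [hRg]
          exact le_trans (hganti hω) h
        have hle : (ℙ {ω | c ≤ U ω}).toReal ≤ (ℙ {ω | R ω ≤ t}).toReal :=
          ENNReal.toReal_mono (measure_ne_top ℙ _) (measure_mono hsub)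
        rw [hU_ge c hc0] at hle
        have h1c : (1 : ℝ) - c = α := by rw [hc]; ring
        rw [h1c, ENNReal.toReal_ofReal (le_of_lt hαpos)] at hle
        exact hle
    have hset : {t : ℝ | α ≤ (ℙ {ω | R ω ≤ t}).toReal} = Set.Ici (g c) := by
      ext t
      simpa [Set.mem_Ici] using key t
    rw [hset, csInf_Ici]
end

section
/- Let S and R be random variables with values in [0,1] such that S ≤_cx R in the convex order, and set μ = E[S] = E[R]. Then for all α ∈ (0,1): (μ + α − 1)/α ≤ (1/α)∫_0^α F_R^{-1}(t) dt ≤ F_S^{-1}(α) ≤ (1/(1−α))∫_α^1 F_R^{-1}(t) dt ≤ μ/(1−α). -/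
open MeasureTheory ProbabilityTheory Set

set_option linter.unusedSectionVars false
set_option maxHeartbeats 1000000

namespace Stmt9Aux

/-- quantile function of a measure on ℝ -/
noncomputable def Q (μ : Measure ℝ) (a : ℝ) : ℝ := sInf {t : ℝ | a ≤ cdf μ t}

variable {Ω : Type*} [MeasurableSpace Ω] {P : Measure Ω} [IsProbabilityMeasure P]
  {Y : Ω → ℝ}

lemma map_Iic (hYm : Measurable Y) (x : ℝ) :
    (P.map Y) (Set.Iic x) = P {ω | Y ω ≤ x} := by
  rw [Measure.map_apply hYm measurableSet_Iic]; rfl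

lemma prob_map (hYm : Measurable Y) : IsProbabilityMeasure (P.map Y) :=
  Measure.isProbabilityMeasure_map hYm.aemeasurable

lemma cdf_map_one (hYm : Measurable Y) (hY01 : ∀ ω, Y ω ∈ Set.Icc (0:ℝ) 1) :
    cdf (P.map Y) 1 = 1 := by
  haveI := prob_map (P := P) hYm
  rw [cdf_eq_real, measureReal_def, map_Iic hYm]
  have h : {ω | Y ω ≤ 1} = Set.univ :=
    Set.eq_univ_of_forall fun ω => (hY01 ω).2
  simp [h]

lemma cdf_map_neg (hYm : Measurable Y) (hY01 : ∀ ω, Y ω ∈ Set.Icc (0:ℝ) 1)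
    {x : ℝ} (hx : x < 0) : cdf (P.map Y) x = 0 := by
  haveI := prob_map (P := P) hYm
  rw [cdf_eq_real, measureReal_def, map_Iic hYm]
  have h : {ω | Y ω ≤ x} = (∅ : Set Ω) := by
    ext ω; simp only [mem_setOf_eq, mem_empty_iff_false, iff_false, not_le]
    exact lt_of_lt_of_le hx (hY01 ω).1
  simp [h]

lemma Qset_nonempty (hYm : Measurable Y) (hY01 : ∀ ω, Y ω ∈ Set.Icc (0:ℝ) 1)
    {a : ℝ} (ha : a ≤ 1) : {t : ℝ | a ≤ cdf (P.map Y) t}.Nonempty :=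
  ⟨1, by simpa [cdf_map_one hYm hY01] using ha⟩

lemma Qset_lb (hYm : Measurable Y) (hY01 : ∀ ω, Y ω ∈ Set.Icc (0:ℝ) 1)
    {a : ℝ} (ha : 0 < a) : ∀ t ∈ {t : ℝ | a ≤ cdf (P.map Y) t}, (0:ℝ) ≤ t := by
  intro t ht
  by_contra hneg
  push_neg at hneg
  rw [mem_setOf_eq, cdf_map_neg hYm hY01 hneg] at ht
  exact absurd (lt_of_lt_of_le ha ht) (lt_irrefl 0)

lemma le_cdf_Q (hYm : Measurable Y) (hY01 : ∀ ω, Y ω ∈ Set.Icc (0:ℝ) 1)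
    {a : ℝ} (ha : a ∈ Set.Ioc (0:ℝ) 1) : a ≤ cdf (P.map Y) (Q (P.map Y) a) := by
  set μ := P.map Y
  set s := {t : ℝ | a ≤ cdf μ t} with hs
  have hne : s.Nonempty := Qset_nonempty hYm hY01 ha.2
  have h1 : ∀ x ∈ Set.Ioi (sInf s), a ≤ cdf μ x := by
    intro x hx
    obtain ⟨t, hts, htx⟩ := exists_lt_of_csInf_lt hne hx
    exact le_trans hts (monotone_cdf μ htx.le)
  have h2 : Filter.Tendsto (cdf μ) (nhdsWithin (sInf s) (Set.Ioi (sInf s)))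
      (nhds (cdf μ (sInf s))) :=
    ((cdf μ).right_continuous _).tendsto.mono_left
      (nhdsWithin_mono _ Set.Ioi_subset_Ici_self)
  exact ge_of_tendsto h2 (eventually_nhdsWithin_of_forall h1)

lemma Q_le_iff (hYm : Measurable Y) (hY01 : ∀ ω, Y ω ∈ Set.Icc (0:ℝ) 1)
    {a : ℝ} (ha : a ∈ Set.Ioc (0:ℝ) 1) (x : ℝ) :
    Q (P.map Y) a ≤ x ↔ a ≤ cdf (P.map Y) x := by
  constructor
  · intro h
    exact le_trans (le_cdf_Q hYm hY01 ha) (monotone_cdf _ h)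
  · intro h
    exact csInf_le ⟨0, fun t ht => Qset_lb hYm hY01 ha.1 t ht⟩ h

lemma Q_nonneg (hYm : Measurable Y) (hY01 : ∀ ω, Y ω ∈ Set.Icc (0:ℝ) 1)
    (a : ℝ) : 0 ≤ Q (P.map Y) a := by
  rcases le_or_gt a 0 with h | h
  · have hu : {t : ℝ | a ≤ cdf (P.map Y) t} = Set.univ :=
      Set.eq_univ_of_forall fun t => le_trans h (cdf_nonneg _ t)
    rw [Q, hu]
    rw [Real.sInf_of_not_bddBelow]
    intro ⟨c, hc⟩
    exact absurd (hc (Set.mem_univ (c - 1))) (by simp)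
  · rcases Set.eq_empty_or_nonempty {t : ℝ | a ≤ cdf (P.map Y) t} with he | hne
    · rw [Q, he, Real.sInf_empty]
    · exact le_csInf hne (Qset_lb hYm hY01 h)

lemma Q_le_one (hYm : Measurable Y) (hY01 : ∀ ω, Y ω ∈ Set.Icc (0:ℝ) 1)
    {a : ℝ} (ha : a ∈ Set.Ioc (0:ℝ) 1) : Q (P.map Y) a ≤ 1 :=
  csInf_le ⟨0, fun t ht => Qset_lb hYm hY01 ha.1 t ht⟩
    (by simpa [mem_setOf_eq, cdf_map_one hYm hY01] using ha.2)

lemma Q_mono (hYm : Measurable Y) (hY01 : ∀ ω, Y ω ∈ Set.Icc (0:ℝ) 1)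
    {a b : ℝ} (ha : 0 < a) (hb : b ≤ 1) (hab : a ≤ b) :
    Q (P.map Y) a ≤ Q (P.map Y) b := by
  apply csInf_le_csInf
  · exact ⟨0, fun t ht => Qset_lb hYm hY01 ha t ht⟩
  · exact Qset_nonempty hYm hY01 hb
  · exact fun t ht => le_trans hab ht

lemma Q_preimage (hYm : Measurable Y) (hY01 : ∀ ω, Y ω ∈ Set.Icc (0:ℝ) 1) (x : ℝ) :
    Q (P.map Y) ⁻¹' (Set.Iic x) =
      if 0 ≤ x then Set.Iic (cdf (P.map Y) x) ∪ Set.Ioi 1 else ∅ := by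
  rcases le_or_gt 0 x with hx | hx
  · rw [if_pos hx]
    ext a
    simp only [mem_preimage, mem_Iic, mem_union, mem_Ioi]
    constructor
    · intro h
      rcases lt_or_ge 1 a with h1 | h1
      · exact Or.inr h1
      rcases le_or_gt a 0 with h0 | h0
      · exact Or.inl (le_trans h0 (cdf_nonneg _ x))
      · exact Or.inl ((Q_le_iff hYm hY01 ⟨h0, h1⟩ x).mp h)
    · rintro (h | h)
      · rcases le_or_gt a 0 with h0 | h0
        · -- Q a = 0 ≤ x when the defining set is univ
          have hu : {t : ℝ | a ≤ cdf (P.map Y) t} = Set.univ :=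
            Set.eq_univ_of_forall fun t => le_trans h0 (cdf_nonneg _ t)
          have : Q (P.map Y) a = 0 := by
            rw [Q, hu, Real.sInf_of_not_bddBelow]
            intro ⟨c, hc⟩
            exact absurd (hc (Set.mem_univ (c - 1))) (by simp)
          rw [this]; exact hx
        · have h1 : a ≤ 1 := le_trans h (cdf_le_one _ x)
          exact (Q_le_iff hYm hY01 ⟨h0, h1⟩ x).mpr h
      · have he : {t : ℝ | a ≤ cdf (P.map Y) t} = ∅ := by
          ext t
          simp only [mem_setOf_eq, mem_empty_iff_false, iff_false, not_le]
          exact lt_of_le_of_lt (cdf_le_one _ t) h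
        have : Q (P.map Y) a = 0 := by rw [Q, he, Real.sInf_empty]
        rw [this]; exact hx
  · rw [if_neg (not_le.mpr hx)]
    ext a
    simp only [mem_preimage, mem_Iic, mem_empty_iff_false, iff_false, not_le]
    exact lt_of_lt_of_le hx (Q_nonneg hYm hY01 a)

lemma Q_measurable (hYm : Measurable Y) (hY01 : ∀ ω, Y ω ∈ Set.Icc (0:ℝ) 1) :
    Measurable (Q (P.map Y)) := by
  apply measurable_of_Iic
  intro x
  rw [Q_preimage hYm hY01]
  split
  · exact measurableSet_Iic.union measurableSet_Ioi
  · exact MeasurableSet.empty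


lemma map_Q (hYm : Measurable Y) (hY01 : ∀ ω, Y ω ∈ Set.Icc (0:ℝ) 1) :
    (volume.restrict (Set.Ioc (0:ℝ) 1)).map (Q (P.map Y)) = P.map Y := by
  haveI := prob_map (P := P) hYm
  haveI : IsFiniteMeasure ((volume.restrict (Set.Ioc (0:ℝ) 1)).map (Q (P.map Y))) := by
    constructor
    rw [Measure.map_apply (Q_measurable hYm hY01) MeasurableSet.univ]
    simp [Real.volume_Ioc]
  refine Measure.ext_of_Iic _ _ (fun x => ?_)
  rw [Measure.map_apply (Q_measurable hYm hY01) measurableSet_Iic,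
      Measure.restrict_apply ((Q_measurable hYm hY01) measurableSet_Iic),
      Q_preimage hYm hY01]
  rcases le_or_gt 0 x with hx | hx
  · rw [if_pos hx]
    have hc0 : 0 ≤ cdf (P.map Y) x := cdf_nonneg _ x
    have hc1 : cdf (P.map Y) x ≤ 1 := cdf_le_one _ x
    have hset : (Set.Iic (cdf (P.map Y) x) ∪ Set.Ioi 1) ∩ Set.Ioc (0:ℝ) 1
        = Set.Ioc 0 (cdf (P.map Y) x) := by
      ext a
      simp only [mem_inter_iff, mem_union, mem_Iic, mem_Ioi, mem_Ioc]
      constructor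
      · rintro ⟨h | h, h0, h1⟩
        · exact ⟨h0, h⟩
        · exact absurd h1 (not_le.mpr h)
      · rintro ⟨h0, h⟩
        exact ⟨Or.inl h, h0, le_trans h hc1⟩
    rw [hset, Real.volume_Ioc, ← ofReal_cdf (P.map Y) x]
    congr 1
    simp
  · rw [if_neg (not_le.mpr hx)]
    have : (P.map Y) (Set.Iic x) = 0 := by
      rw [← ofReal_cdf (P.map Y) x, cdf_map_neg hYm hY01 hx]
      simp
    simp [this]

lemma integral_comp (hYm : Measurable Y) (hY01 : ∀ ω, Y ω ∈ Set.Icc (0:ℝ) 1)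
    {f : ℝ → ℝ} (hf : Continuous f) :
    ∫ ω, f (Y ω) ∂P = ∫ a in Set.Ioc (0:ℝ) 1, f (Q (P.map Y) a) := by
  have h := integral_map (μ := volume.restrict (Set.Ioc (0:ℝ) 1))
    (Q_measurable (P := P) hYm hY01).aemeasurable
    (hf.aestronglyMeasurable (μ := (volume.restrict (Set.Ioc (0:ℝ) 1)).map (Q (P.map Y))))
  rw [map_Q hYm hY01] at h
  rw [← integral_map hYm.aemeasurable hf.aestronglyMeasurable, h]

lemma integrableOn_comp_Q (hYm : Measurable Y) (hY01 : ∀ ω, Y ω ∈ Set.Icc (0:ℝ) 1)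
    {f : ℝ → ℝ} (hf : Continuous f) :
    IntegrableOn (fun a => f (Q (P.map Y) a)) (Set.Ioc (0:ℝ) 1) volume := by
  obtain ⟨C, hC⟩ := isCompact_Icc.exists_bound_of_continuousOn
    (hf.continuousOn : ContinuousOn f (Set.Icc (0:ℝ) 1))
  refine Integrable.mono' (integrable_const C)
    ((hf.measurable.comp (Q_measurable hYm hY01)).aestronglyMeasurable) ?_
  refine (ae_restrict_iff' measurableSet_Ioc).mpr (Filter.Eventually.of_forall ?_)
  intro a ha
  exact hC _ ⟨Q_nonneg hYm hY01 a, Q_le_one hYm hY01 ha⟩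

lemma integrable_comp (hYm : Measurable Y) (hY01 : ∀ ω, Y ω ∈ Set.Icc (0:ℝ) 1)
    {f : ℝ → ℝ} (hf : Continuous f) :
    Integrable (fun ω => f (Y ω)) P := by
  obtain ⟨C, hC⟩ := isCompact_Icc.exists_bound_of_continuousOn
    (hf.continuousOn : ContinuousOn f (Set.Icc (0:ℝ) 1))
  refine Integrable.mono' (integrable_const C)
    ((hf.measurable.comp hYm).aestronglyMeasurable) ?_
  exact Filter.Eventually.of_forall fun ω => hC _ (hY01 ω)


end Stmt9Aux

open Stmt9Aux

theorem stmt_9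
    {Ω : Type*} [MeasurableSpace Ω] (P : Measure Ω) [IsProbabilityMeasure P]
    (S R : Ω → ℝ) (hSm : Measurable S) (hRm : Measurable R)
    (hS01 : ∀ ω, S ω ∈ Set.Icc (0:ℝ) 1) (hR01 : ∀ ω, R ω ∈ Set.Icc (0:ℝ) 1)
    (hcx : ∀ φ : ℝ → ℝ, ConvexOn ℝ Set.univ φ →
      Integrable (fun ω => φ (S ω)) P → Integrable (fun ω => φ (R ω)) P →
      ∫ ω, φ (S ω) ∂P ≤ ∫ ω, φ (R ω) ∂P)
    (FS FR : ℝ → ℝ)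
    (hFS : ∀ a, FS a = sInf {t : ℝ | a ≤ (P {ω | S ω ≤ t}).toReal})
    (hFR : ∀ a, FR a = sInf {t : ℝ | a ≤ (P {ω | R ω ≤ t}).toReal})
    (c : ℝ) (hcS : c = ∫ ω, S ω ∂P) (hcR : c = ∫ ω, R ω ∂P) :
    ∀ α ∈ Set.Ioo (0:ℝ) 1,
      (c + α - 1) / α ≤ (1 / α) * ∫ t in (0:ℝ)..α, FR t ∧
      (1 / α) * (∫ t in (0:ℝ)..α, FR t) ≤ FS α ∧
      FS α ≤ (1 / (1 - α)) * ∫ t in α..(1:ℝ), FR t ∧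
      (1 / (1 - α)) * (∫ t in α..(1:ℝ), FR t) ≤ c / (1 - α) := by
  intro α hα
  obtain ⟨hα0, hα1⟩ := hα
  haveI := prob_map (P := P) hSm
  haveI := prob_map (P := P) hRm
  set GS := Q (P.map S) with hGSdef
  set GR := Q (P.map R) with hGRdef
  -- identification of FS, FR with quantile functions
  have hcdfS : ∀ t, (P {ω | S ω ≤ t}).toReal = cdf (P.map S) t := fun t => by
    rw [cdf_eq_real, measureReal_def, map_Iic hSm]
  have hcdfR : ∀ t, (P {ω | R ω ≤ t}).toReal = cdf (P.map R) t := fun t => by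
    rw [cdf_eq_real, measureReal_def, map_Iic hRm]
  have hFSQ : ∀ a, FS a = GS a := by
    intro a; rw [hFS, hGSdef]; unfold Q; simp only [hcdfS]
  have hFRQ : ∀ a, FR a = GR a := by
    intro a; rw [hFR, hGRdef]; unfold Q; simp only [hcdfR]
  -- interval integrals as set integrals
  have hint1 : ∫ t in (0:ℝ)..α, FR t = ∫ t in Set.Ioc (0:ℝ) α, GR t := by
    rw [intervalIntegral.integral_of_le hα0.le]; simp only [hFRQ]
  have hint2 : ∫ t in α..(1:ℝ), FR t = ∫ t in Set.Ioc α (1:ℝ), GR t := by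
    rw [intervalIntegral.integral_of_le hα1.le]; simp only [hFRQ]
  -- integrability
  have hIS : IntegrableOn GS (Set.Ioc (0:ℝ) 1) volume :=
    integrableOn_comp_Q (P := P) hSm hS01 (f := id) continuous_id
  have hIR : IntegrableOn GR (Set.Ioc (0:ℝ) 1) volume :=
    integrableOn_comp_Q (P := P) hRm hR01 (f := id) continuous_id
  have sub1 : Set.Ioc (0:ℝ) α ⊆ Set.Ioc (0:ℝ) 1 := Set.Ioc_subset_Ioc_right hα1.le
  have sub2 : Set.Ioc α (1:ℝ) ⊆ Set.Ioc (0:ℝ) 1 := Set.Ioc_subset_Ioc_left hα0.le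
  have hvol1 : (volume (Set.Ioc (0:ℝ) α)).toReal = α := by
    rw [Real.volume_Ioc]; simp [ENNReal.toReal_ofReal hα0.le]
  have hvol2 : (volume (Set.Ioc α (1:ℝ))).toReal = 1 - α := by
    rw [Real.volume_Ioc]; rw [ENNReal.toReal_ofReal (by linarith)]
  have hvolfin1 : volume (Set.Ioc (0:ℝ) α) < ⊤ := by
    rw [Real.volume_Ioc]; exact ENNReal.ofReal_lt_top
  have hvolfin2 : volume (Set.Ioc α (1:ℝ)) < ⊤ := by
    rw [Real.volume_Ioc]; exact ENNReal.ofReal_lt_top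
  have hsplit : ∀ (f : ℝ → ℝ), IntegrableOn f (Set.Ioc (0:ℝ) 1) volume →
      ∫ t in Set.Ioc (0:ℝ) 1, f t = (∫ t in Set.Ioc (0:ℝ) α, f t) + ∫ t in Set.Ioc α (1:ℝ), f t := by
    intro f hf
    rw [← Set.Ioc_union_Ioc_eq_Ioc hα0.le hα1.le]
    exact setIntegral_union (Set.Ioc_disjoint_Ioc_of_le le_rfl) measurableSet_Ioc
      (hf.mono_set sub1) (hf.mono_set sub2)
  -- totals
  have hTS : ∫ a in Set.Ioc (0:ℝ) 1, GS a = c := by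
    rw [hcS]; exact (integral_comp (P := P) hSm hS01 (f := id) continuous_id).symm
  have hTR : ∫ a in Set.Ioc (0:ℝ) 1, GR a = c := by
    rw [hcR]; exact (integral_comp (P := P) hRm hR01 (f := id) continuous_id).symm
  have hsumS : (∫ a in Set.Ioc (0:ℝ) α, GS a) + ∫ a in Set.Ioc α (1:ℝ), GS a = c := by
    rw [← hsplit GS hIS]; exact hTS
  have hsumR : (∫ a in Set.Ioc (0:ℝ) α, GR a) + ∫ a in Set.Ioc α (1:ℝ), GR a = c := by
    rw [← hsplit GR hIR]; exact hTR
  -- bounds on GR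
  have hGR0 : ∀ a, 0 ≤ GR a := Q_nonneg hRm hR01
  -- upper bound for the tail integral of GR
  have htail_le : ∫ a in Set.Ioc α (1:ℝ), GR a ≤ 1 - α := by
    calc ∫ a in Set.Ioc α (1:ℝ), GR a ≤ ∫ _a in Set.Ioc α (1:ℝ), (1:ℝ) := by
          refine setIntegral_mono_on (hIR.mono_set sub2)
            (integrableOn_const hvolfin2.ne) measurableSet_Ioc ?_
          intro a ha
          exact Q_le_one hRm hR01 (sub2 ha)
      _ = 1 - α := by rw [setIntegral_const, measureReal_def, hvol2, smul_eq_mul, mul_one]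
  have hhead_nonneg : 0 ≤ ∫ a in Set.Ioc (0:ℝ) α, GR a :=
    setIntegral_nonneg measurableSet_Ioc fun a _ => hGR0 a
  -- the core convex-order inequality on tails
  set x := GR α with hxdef
  have hαIoc : α ∈ Set.Ioc (0:ℝ) 1 := ⟨hα0, hα1.le⟩
  set φ : ℝ → ℝ := fun y => max (y - x) 0 with hφdef
  have hφc : Continuous φ := (continuous_id.sub continuous_const).max continuous_const
  have hφconv : ConvexOn ℝ Set.univ φ := by
    have h1 : ConvexOn ℝ (Set.univ : Set ℝ) (fun y => y - x) :=
      (convexOn_id convex_univ).sub (concaveOn_const x convex_univ)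
    have h2 := h1.sup (convexOn_const (0:ℝ) convex_univ)
    have heq : ((fun y => y - x) ⊔ (fun _ => (0:ℝ))) = φ := by
      funext y; simp [hφdef, Pi.sup_apply]
    rwa [heq] at h2
  have hIφS : IntegrableOn (fun a => φ (GS a)) (Set.Ioc (0:ℝ) 1) volume :=
    integrableOn_comp_Q hSm hS01 hφc
  have hIφR : IntegrableOn (fun a => φ (GR a)) (Set.Ioc (0:ℝ) 1) volume :=
    integrableOn_comp_Q hRm hR01 hφc
  have hcxφ : ∫ ω, φ (S ω) ∂P ≤ ∫ ω, φ (R ω) ∂P :=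
    hcx φ hφconv (integrable_comp hSm hS01 hφc) (integrable_comp hRm hR01 hφc)
  have hstep1 : ∫ a in Set.Ioc α (1:ℝ), GS a ≤
      (∫ a in Set.Ioc α (1:ℝ), φ (GS a)) + (1 - α) * x := by
    have hconst : IntegrableOn (fun _ : ℝ => x) (Set.Ioc α (1:ℝ)) volume :=
      integrableOn_const hvolfin2.ne
    calc ∫ a in Set.Ioc α (1:ℝ), GS a
        ≤ ∫ a in Set.Ioc α (1:ℝ), (φ (GS a) + x) := by
          refine setIntegral_mono_on (hIS.mono_set sub2)
            ((hIφS.mono_set sub2).add hconst) measurableSet_Ioc ?_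
          intro a _
          have := le_max_left (GS a - x) 0
          simp only [hφdef]; linarith
      _ = (∫ a in Set.Ioc α (1:ℝ), φ (GS a)) + (1 - α) * x := by
          rw [integral_add (hIφS.mono_set sub2) hconst, setIntegral_const, measureReal_def, hvol2, smul_eq_mul]
  have hstep2 : ∫ a in Set.Ioc α (1:ℝ), φ (GS a) ≤ ∫ a in Set.Ioc (0:ℝ) 1, φ (GS a) := by
    refine setIntegral_mono_set hIφS ?_ (HasSubset.Subset.eventuallyLE sub2)
    exact Filter.Eventually.of_forall fun a => le_max_right _ _
  have hstep3 : ∫ a in Set.Ioc (0:ℝ) 1, φ (GS a) ≤ ∫ a in Set.Ioc (0:ℝ) 1, φ (GR a) := by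
    rw [← integral_comp hSm hS01 hφc, ← integral_comp hRm hR01 hφc]
    exact hcxφ
  have hstep4 : ∫ a in Set.Ioc (0:ℝ) α, φ (GR a) = 0 := by
    have heq : Set.EqOn (fun a => φ (GR a)) (fun _ => (0:ℝ)) (Set.Ioc (0:ℝ) α) := by
      intro a ha
      have hle : GR a ≤ x := Q_mono hRm hR01 ha.1 hα1.le ha.2
      simp only [hφdef]
      exact max_eq_right (by linarith)
    rw [setIntegral_congr_fun measurableSet_Ioc heq, integral_zero]
  have hstep5 : ∫ a in Set.Ioc α (1:ℝ), φ (GR a) =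
      (∫ a in Set.Ioc α (1:ℝ), GR a) - (1 - α) * x := by
    have hconst : IntegrableOn (fun _ : ℝ => x) (Set.Ioc α (1:ℝ)) volume :=
      integrableOn_const hvolfin2.ne
    have heq : Set.EqOn (fun a => φ (GR a)) (fun a => GR a - x) (Set.Ioc α (1:ℝ)) := by
      intro a ha
      have hge : x ≤ GR a := Q_mono hRm hR01 hα0 ha.2 ha.1.le
      simp only [hφdef]
      exact max_eq_left (by linarith)
    rw [setIntegral_congr_fun measurableSet_Ioc heq,
      integral_sub (hIR.mono_set sub2) hconst, setIntegral_const, measureReal_def, hvol2, smul_eq_mul]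
  have hstar : ∫ a in Set.Ioc α (1:ℝ), GS a ≤ ∫ a in Set.Ioc α (1:ℝ), GR a := by
    have h01split := hsplit (fun a => φ (GR a)) hIφR
    linarith [hstep1, hstep2, hstep3, hstep4, hstep5]
  -- pointwise bounds of GS integrals by constants
  have hconst1 : IntegrableOn (fun _ : ℝ => GS α) (Set.Ioc (0:ℝ) α) volume :=
    integrableOn_const hvolfin1.ne
  have hconst2 : IntegrableOn (fun _ : ℝ => GS α) (Set.Ioc α (1:ℝ)) volume :=
    integrableOn_const hvolfin2.ne
  have hheadS_le : ∫ a in Set.Ioc (0:ℝ) α, GS a ≤ α * GS α := by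
    calc ∫ a in Set.Ioc (0:ℝ) α, GS a ≤ ∫ _a in Set.Ioc (0:ℝ) α, GS α := by
          refine setIntegral_mono_on (hIS.mono_set sub1) hconst1 measurableSet_Ioc ?_
          intro a ha
          exact Q_mono hSm hS01 ha.1 hα1.le ha.2
      _ = α * GS α := by rw [setIntegral_const, measureReal_def, hvol1, smul_eq_mul]
  have htailS_ge : (1 - α) * GS α ≤ ∫ a in Set.Ioc α (1:ℝ), GS a := by
    calc (1 - α) * GS α = ∫ _a in Set.Ioc α (1:ℝ), GS α := by
          rw [setIntegral_const, measureReal_def, hvol2, smul_eq_mul]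
      _ ≤ ∫ a in Set.Ioc α (1:ℝ), GS a := by
          refine setIntegral_mono_on hconst2 (hIS.mono_set sub2) measurableSet_Ioc ?_
          intro a ha
          exact Q_mono hSm hS01 hα0 ha.2 ha.1.le
  -- conclude
  have h1α : (0:ℝ) < 1 - α := by linarith
  refine ⟨?_, ?_, ?_, ?_⟩
  · -- (c + α - 1)/α ≤ (1/α) ∫₀^α FR
    rw [hint1]
    have hkey : c + α - 1 ≤ ∫ a in Set.Ioc (0:ℝ) α, GR a := by linarith
    rw [div_le_iff₀ hα0]
    have hid : (1 / α) * (∫ a in Set.Ioc (0:ℝ) α, GR a) * α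
        = ∫ a in Set.Ioc (0:ℝ) α, GR a := by field_simp
    linarith
  · -- (1/α) ∫₀^α FR ≤ FS α
    rw [hint1, hFSQ]
    have hkey : ∫ a in Set.Ioc (0:ℝ) α, GR a ≤ α * GS α := by linarith
    have hmul := mul_le_mul_of_nonneg_left hkey (le_of_lt (one_div_pos.mpr hα0))
    have hid : (1 / α) * (α * GS α) = GS α := by field_simp
    linarith
  · -- FS α ≤ (1/(1-α)) ∫_α^1 FR
    rw [hint2, hFSQ]
    have hkey : (1 - α) * GS α ≤ ∫ a in Set.Ioc α (1:ℝ), GR a := by linarith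
    have hmul := mul_le_mul_of_nonneg_left hkey (le_of_lt (one_div_pos.mpr h1α))
    have hid : (1 / (1 - α)) * ((1 - α) * GS α) = GS α := by field_simp
    linarith
  · -- (1/(1-α)) ∫_α^1 FR ≤ c/(1-α)
    rw [hint2]
    have hkey : ∫ a in Set.Ioc α (1:ℝ), GR a ≤ c := by linarith
    rw [div_eq_mul_inv c, ← one_div]
    have hmul := mul_le_mul_of_nonneg_left hkey (le_of_lt (one_div_pos.mpr h1α))
    linarith
end

section
/- Let p : X → [0,1] be measurable on (X, P_X), U uniform on [0,1], R = ∫_X 1_{p(x) > U} P_X(dx), and F_R^{-1} the quantile function of R. Then for all α ∈ (0,1): (1/α)∫_0^α F_R^{-1}(t) dt = 1 − ∫_X min(1, (1−p(x))/α) P_X(dx), and (1/(1−α))∫_α^1 F_R^{-1}(t) dt = ∫_X min(1, p(x)/(1−α)) P_X(dx). -/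
open MeasureTheory
open scoped ENNReal

theorem stmt_11
    {Ω X : Type*} [MeasurableSpace Ω] [MeasurableSpace X]
    (P : Measure Ω) [IsProbabilityMeasure P]
    (μ : Measure X) [IsProbabilityMeasure μ]
    (p : X → ℝ) (hpm : Measurable p) (hp01 : ∀ x, p x ∈ Set.Icc (0:ℝ) 1)
    (U : Ω → ℝ) (hUm : Measurable U)
    (hU : Measure.map U P = volume.restrict (Set.Icc (0:ℝ) 1))
    (R : Ω → ℝ) (hR : ∀ ω, R ω = (μ {x | U ω < p x}).toReal)
    (FR : ℝ → ℝ)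
    (hFR : ∀ a, FR a = sInf {t : ℝ | a ≤ (P {ω | R ω ≤ t}).toReal}) :
    ∀ α ∈ Set.Ioo (0:ℝ) 1,
      (1 / α) * (∫ t in (0:ℝ)..α, FR t)
          = 1 - ∫ x, min 1 ((1 - p x) / α) ∂μ ∧
      (1 / (1 - α)) * (∫ t in α..(1:ℝ), FR t)
          = ∫ x, min 1 (p x / (1 - α)) ∂μ := by
  intro α hα
  obtain ⟨hα0, hα1⟩ := hα
  have h1α : (0:ℝ) < 1 - α := by linarith
  have hsetm : ∀ u : ℝ, MeasurableSet {x | u < p x} := fun u =>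
    measurableSet_lt measurable_const hpm
  have hμle : ∀ u : ℝ, μ {x | u < p x} ≤ 1 := fun u => prob_le_one
  have hμne : ∀ u : ℝ, μ {x | u < p x} ≠ ⊤ := fun u => measure_ne_top μ _
  set g : ℝ → ℝ := fun u => (μ {x | u < p x}).toReal with hgdef
  have hganti : Antitone g := by
    intro u v huv
    exact ENNReal.toReal_mono (hμne u) (measure_mono fun x hx => lt_of_le_of_lt huv hx)
  have hg0 : ∀ u, 0 ≤ g u := fun u => ENNReal.toReal_nonneg
  -- right continuity of g
  have hrc : ∀ u s : ℝ, (∀ δ : ℝ, 0 < δ → g (u + δ) ≤ s) → g u ≤ s := by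
    intro u s h
    rcases le_or_gt 0 s with hs | hs
    · have hUn : {x | u < p x} = ⋃ n : ℕ, {x | u + 1/(n+1) < p x} := by
        ext x
        simp only [Set.mem_setOf_eq, Set.mem_iUnion]
        constructor
        · intro hx
          obtain ⟨n, hn⟩ := exists_nat_one_div_lt (sub_pos.mpr hx)
          exact ⟨n, by linarith⟩
        · rintro ⟨n, hn⟩
          have hpos : (0:ℝ) < 1/((n:ℝ)+1) := by positivity
          linarith
      have hmon : Monotone fun n : ℕ => {x | u + 1/((n:ℝ)+1) < p x} := by
        intro n m hnm x hx
        simp only [Set.mem_setOf_eq] at hx ⊢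
        have hcast : ((n:ℝ)+1) ≤ ((m:ℝ)+1) := by
          have := (Nat.cast_le (α := ℝ)).mpr hnm; linarith
        have : (1:ℝ)/((m:ℝ)+1) ≤ 1/((n:ℝ)+1) :=
          one_div_le_one_div_of_le (by positivity) hcast
        linarith
      have hle : μ {x | u < p x} ≤ ENNReal.ofReal s := by
        rw [hUn, hmon.measure_iUnion]
        refine iSup_le fun n => ?_
        exact (ENNReal.le_ofReal_iff_toReal_le (hμne _) hs).mpr (h (1/((n:ℝ)+1)) (by positivity))
      calc g u ≤ (ENNReal.ofReal s).toReal := ENNReal.toReal_mono ENNReal.ofReal_ne_top hle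
        _ = s := ENNReal.toReal_ofReal hs
    · exact absurd (lt_of_le_of_lt (h 1 one_pos) hs) (not_lt.mpr (hg0 _))
  have hRg : ∀ ω, R ω = g (U ω) := fun ω => hR ω
  -- measure of U-events
  have hPU : ∀ b : ℝ, P {ω | b ≤ U ω} = volume (Set.Ici b ∩ Set.Icc 0 1) := by
    intro b
    have h1 : {ω | b ≤ U ω} = U ⁻¹' Set.Ici b := rfl
    rw [h1, ← Measure.map_apply hUm measurableSet_Ici, hU,
      Measure.restrict_apply measurableSet_Ici]
  have hPU' : ∀ b : ℝ, P {ω | b < U ω} ≤ ENNReal.ofReal (1 - b) := by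
    intro b
    have h1 : {ω | b < U ω} = U ⁻¹' Set.Ioi b := rfl
    rw [h1, ← Measure.map_apply hUm measurableSet_Ioi, hU,
      Measure.restrict_apply measurableSet_Ioi]
    refine le_trans (measure_mono (fun t ht => ?_)) (le_of_eq (Real.volume_Ioc))
    exact ⟨ht.1, ht.2.2⟩
  -- quantile identification
  have hFRval : ∀ a, a ∈ Set.Ioo (0:ℝ) 1 → FR a = g (1 - a) := by
    intro a ha
    have hset : {t : ℝ | a ≤ (P {ω | R ω ≤ t}).toReal} = Set.Ici (g (1 - a)) := by
      ext s
      simp only [Set.mem_setOf_eq, Set.mem_Ici]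
      constructor
      · intro hs
        by_contra hlt
        push_neg at hlt
        have hne : ¬ ∀ δ : ℝ, 0 < δ → g (1 - a + δ) ≤ s := fun h =>
          absurd (hrc _ _ h) (not_le.mpr hlt)
        push_neg at hne
        obtain ⟨δ, hδ, hgs⟩ := hne
        have hsub : {ω | R ω ≤ s} ⊆ {ω | 1 - a + δ < U ω} := by
          intro ω hω
          simp only [Set.mem_setOf_eq] at hω ⊢
          by_contra hu
          push_neg at hu
          have h2 := hganti hu
          rw [hRg ω] at hω
          linarith
        have hle2 : P {ω | R ω ≤ s} ≤ ENNReal.ofReal (a - δ) := by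
          refine le_trans (measure_mono hsub) (le_trans (hPU' _) ?_)
          exact ENNReal.ofReal_le_ofReal (by linarith)
        have h3 : (P {ω | R ω ≤ s}).toReal ≤ max (a - δ) 0 := by
          have h4 := ENNReal.toReal_mono ENNReal.ofReal_ne_top hle2
          rwa [ENNReal.toReal_ofReal'] at h4
        have h5 : max (a - δ) 0 < a := max_lt (by linarith) ha.1
        linarith
      · intro hs
        have hsub : {ω | 1 - a ≤ U ω} ⊆ {ω | R ω ≤ s} := by
          intro ω hω
          simp only [Set.mem_setOf_eq] at hω ⊢
          rw [hRg ω]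
          exact le_trans (hganti hω) hs
        have hIcc : Set.Ici (1-a) ∩ Set.Icc (0:ℝ) 1 = Set.Icc (1-a) 1 := by
          ext t
          simp only [Set.mem_inter_iff, Set.mem_Ici, Set.mem_Icc]
          constructor
          · rintro ⟨h1, _, h3⟩; exact ⟨h1, h3⟩
          · rintro ⟨h1, h2⟩; exact ⟨h1, by linarith [ha.2], h2⟩
        have hval : ENNReal.ofReal a ≤ P {ω | R ω ≤ s} := by
          have heq : P {ω | 1 - a ≤ U ω} = ENNReal.ofReal a := by
            rw [hPU, hIcc, Real.volume_Icc]; norm_num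
          calc ENNReal.ofReal a = P {ω | 1 - a ≤ U ω} := heq.symm
            _ ≤ _ := measure_mono hsub
        have h6 := ENNReal.toReal_mono (measure_ne_top P _) hval
        rwa [ENNReal.toReal_ofReal ha.1.le] at h6
    rw [hFR, hset, csInf_Ici]
  -- Fubini
  have hE : MeasurableSet {q : ℝ × X | 1 - q.1 < p q.2} :=
    measurableSet_lt (measurable_const.sub measurable_fst) (hpm.comp measurable_snd)
  have hmeasF : Measurable fun t : ℝ => μ {x | 1 - t < p x} :=
    measurable_measure_prodMk_left hE
  have key : ∀ S : Set ℝ, MeasurableSet S →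
      ∫⁻ t in S, μ {x | 1 - t < p x} ∂volume = ∫⁻ x, volume (Set.Ioi (1 - p x) ∩ S) ∂μ := by
    intro S hS
    have hf : Measurable fun q : ℝ × X =>
        Set.indicator {q : ℝ × X | 1 - q.1 < p q.2} (fun _ => (1:ℝ≥0∞)) q :=
      measurable_const.indicator hE
    calc ∫⁻ t in S, μ {x | 1 - t < p x} ∂volume
        = ∫⁻ t in S, ∫⁻ x, Set.indicator {q : ℝ × X | 1 - q.1 < p q.2}
            (fun _ => (1:ℝ≥0∞)) (t, x) ∂μ ∂volume := by
          refine lintegral_congr fun t => ?_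
          have h1 : (fun x => Set.indicator {q : ℝ × X | 1 - q.1 < p q.2}
              (fun _ => (1:ℝ≥0∞)) (t, x))
              = Set.indicator {x | 1 - t < p x} (fun _ => (1:ℝ≥0∞)) := by
            ext x
            simp only [Set.indicator_apply, Set.mem_setOf_eq]
          rw [h1, lintegral_indicator (hsetm (1 - t)), setLIntegral_one]
      _ = ∫⁻ x, ∫⁻ t in S, Set.indicator {q : ℝ × X | 1 - q.1 < p q.2}
            (fun _ => (1:ℝ≥0∞)) (t, x) ∂volume ∂μ :=
          lintegral_lintegral_swap hf.aemeasurable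
      _ = ∫⁻ x, volume (Set.Ioi (1 - p x) ∩ S) ∂μ := by
          refine lintegral_congr fun x => ?_
          have h1 : (fun t => Set.indicator {q : ℝ × X | 1 - q.1 < p q.2}
              (fun _ => (1:ℝ≥0∞)) (t, x))
              = Set.indicator (Set.Ioi (1 - p x)) (fun _ => (1:ℝ≥0∞)) := by
            ext t
            simp only [Set.indicator_apply, Set.mem_setOf_eq, Set.mem_Ioi, sub_lt_comm]
          rw [h1, lintegral_indicator measurableSet_Ioi, setLIntegral_one,
            Measure.restrict_apply measurableSet_Ioi]
  have hofm : AEMeasurable (fun x => ENNReal.ofReal (α - (1 - p x))) μ :=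
    (ENNReal.measurable_ofReal.comp (measurable_const.sub (measurable_const.sub hpm))).aemeasurable
  have hofm2 : AEMeasurable (fun x => ENNReal.ofReal (min (p x) (1 - α))) μ :=
    (ENNReal.measurable_ofReal.comp (hpm.min measurable_const)).aemeasurable
  -- first integral
  have int1 : ∫ t in (0:ℝ)..α, FR t = ∫ x, max (α - (1 - p x)) 0 ∂μ := by
    rw [intervalIntegral.integral_of_le hα0.le]
    have e1 : ∫ t in Set.Ioc 0 α, FR t ∂volume = ∫ t in Set.Ioc 0 α, g (1 - t) ∂volume :=
      setIntegral_congr_fun measurableSet_Ioc fun t ht =>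
        hFRval t ⟨ht.1, lt_of_le_of_lt ht.2 hα1⟩
    have e2 : ∫ t in Set.Ioc 0 α, g (1 - t) ∂volume
        = (∫⁻ t in Set.Ioc 0 α, μ {x | 1 - t < p x} ∂volume).toReal := by
      rw [← integral_toReal hmeasF.aemeasurable.restrict
        (Filter.Eventually.of_forall fun t => lt_of_le_of_lt (hμle _) ENNReal.one_lt_top)]
    have e3 : ∀ x, Set.Ioi (1 - p x) ∩ Set.Ioc 0 α = Set.Ioc (1 - p x) α := by
      intro x
      have h0 : (0:ℝ) ≤ 1 - p x := by linarith [(hp01 x).2]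
      ext t
      simp only [Set.mem_inter_iff, Set.mem_Ioi, Set.mem_Ioc]
      constructor
      · rintro ⟨hh1, _, hh3⟩; exact ⟨hh1, hh3⟩
      · rintro ⟨hh1, hh2⟩; exact ⟨hh1, lt_of_le_of_lt h0 hh1, hh2⟩
    have e4 : ∫⁻ x, volume (Set.Ioi (1 - p x) ∩ Set.Ioc 0 α) ∂μ
        = ∫⁻ x, ENNReal.ofReal (α - (1 - p x)) ∂μ := by
      refine lintegral_congr fun x => ?_
      rw [e3 x, Real.volume_Ioc]
    rw [e1, e2, key _ measurableSet_Ioc, e4,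
      ← integral_toReal hofm (Filter.Eventually.of_forall fun x => ENNReal.ofReal_lt_top)]
    refine integral_congr_ae (Filter.Eventually.of_forall fun x => ?_)
    simp only [ENNReal.toReal_ofReal']
  -- second integral
  have int2 : ∫ t in α..(1:ℝ), FR t = ∫ x, max (min (p x) (1 - α)) 0 ∂μ := by
    rw [intervalIntegral.integral_of_le hα1.le, integral_Ioc_eq_integral_Ioo]
    have e1 : ∫ t in Set.Ioo α 1, FR t ∂volume = ∫ t in Set.Ioo α 1, g (1 - t) ∂volume :=
      setIntegral_congr_fun measurableSet_Ioo fun t ht =>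
        hFRval t ⟨lt_trans hα0 ht.1, ht.2⟩
    have e2 : ∫ t in Set.Ioo α 1, g (1 - t) ∂volume
        = (∫⁻ t in Set.Ioo α 1, μ {x | 1 - t < p x} ∂volume).toReal := by
      rw [← integral_toReal hmeasF.aemeasurable.restrict
        (Filter.Eventually.of_forall fun t => lt_of_le_of_lt (hμle _) ENNReal.one_lt_top)]
    have e3 : ∀ x, Set.Ioi (1 - p x) ∩ Set.Ioo α 1 = Set.Ioo (max (1 - p x) α) 1 := by
      intro x
      ext t
      simp only [Set.mem_inter_iff, Set.mem_Ioi, Set.mem_Ioo, max_lt_iff]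
      tauto
    have e4 : ∫⁻ x, volume (Set.Ioi (1 - p x) ∩ Set.Ioo α 1) ∂μ
        = ∫⁻ x, ENNReal.ofReal (min (p x) (1 - α)) ∂μ := by
      refine lintegral_congr fun x => ?_
      rw [e3 x, Real.volume_Ioo]
      congr 1
      rcases le_total (1 - p x) α with h | h
      · rw [max_eq_right h, min_eq_right (by linarith)]
      · rw [max_eq_left h, min_eq_left (by linarith)]
        ring
    rw [e1, e2, key _ measurableSet_Ioo, e4,
      ← integral_toReal hofm2 (Filter.Eventually.of_forall fun x => ENNReal.ofReal_lt_top)]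
    refine integral_congr_ae (Filter.Eventually.of_forall fun x => ?_)
    simp only [ENNReal.toReal_ofReal']
  -- pointwise algebra
  have ptw1 : ∀ x, max (α - (1 - p x)) 0 = α * (1 - min 1 ((1 - p x)/α)) := by
    intro x
    rcases le_or_gt (1 - p x) α with h | h
    · rw [max_eq_left (by linarith), min_eq_right (by rw [div_le_one hα0]; exact h)]
      field_simp
    · rw [max_eq_right (by linarith), min_eq_left (by rw [le_div_iff₀ hα0]; linarith)]
      ring
  have ptw2 : ∀ x, max (min (p x) (1 - α)) 0 = (1 - α) * min 1 (p x / (1 - α)) := by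
    intro x
    have hp0 := (hp01 x).1
    rcases le_or_gt (p x) (1 - α) with h | h
    · rw [min_eq_left h, max_eq_left hp0, min_eq_right (by rw [div_le_one h1α]; exact h)]
      field_simp
    · rw [min_eq_right h.le, max_eq_left h1α.le, min_eq_left (by rw [le_div_iff₀ h1α]; linarith)]
      ring
  have intmin : Integrable (fun x => min 1 ((1 - p x)/α)) μ := by
    refine (integrable_const (1:ℝ)).mono'
      ((measurable_const.min ((measurable_const.sub hpm).div_const α)).aestronglyMeasurable)
      (Filter.Eventually.of_forall fun x => ?_)
    have h0 : (0:ℝ) ≤ (1 - p x)/α := by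
      apply div_nonneg (by linarith [(hp01 x).2]) hα0.le
    rw [Real.norm_eq_abs, abs_le]
    constructor
    · have h1 := le_min zero_le_one h0
      linarith
    · exact min_le_left _ _
  constructor
  · rw [int1]
    have : ∫ x, max (α - (1 - p x)) 0 ∂μ = α * (1 - ∫ x, min 1 ((1 - p x)/α) ∂μ) := by
      calc ∫ x, max (α - (1 - p x)) 0 ∂μ
          = ∫ x, α * (1 - min 1 ((1 - p x)/α)) ∂μ :=
            integral_congr_ae (Filter.Eventually.of_forall fun x => ptw1 x)
        _ = α * ∫ x, (1 - min 1 ((1 - p x)/α)) ∂μ := integral_const_mul α _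
        _ = α * (1 - ∫ x, min 1 ((1 - p x)/α) ∂μ) := by
            rw [integral_sub (integrable_const 1) intmin, integral_const]
            simp
    rw [this]
    field_simp
  · rw [int2]
    have : ∫ x, max (min (p x) (1 - α)) 0 ∂μ = (1 - α) * ∫ x, min 1 (p x / (1 - α)) ∂μ := by
      calc ∫ x, max (min (p x) (1 - α)) 0 ∂μ
          = ∫ x, (1 - α) * min 1 (p x / (1 - α)) ∂μ :=
            integral_congr_ae (Filter.Eventually.of_forall fun x => ptw2 x)
        _ = (1 - α) * ∫ x, min 1 (p x / (1 - α)) ∂μ := integral_const_mul _ _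
    rw [this]
    field_simp
end

section
/- Let p : X → [0,1] be measurable and define, for each x ∈ X, η(x) = ∫_0^{p(x)} G(u) du − μ·p(x), where G(t) = ∫_X 1_{p(y) > t} P_X(dy) and μ = ∫_X p(y) P_X(dy). Then η(x) = (1 − p(x)) ∫_X p(y) 1_{p(y) ≤ p(x)} P_X(dy) + p(x) ∫_X (1 − p(y)) 1_{p(y) > p(x)} P_X(dy), provided P_X(p(y) = p(x)) = 0 for P_X-almost every x (absolute continuity of the law of p). -/
open MeasureTheory

theorem stmt_18
    {X : Type*} [MeasurableSpace X] (μ : Measure X) [IsProbabilityMeasure μ]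
    (p : X → ℝ) (hpm : Measurable p) (hp01 : ∀ x, p x ∈ Set.Icc (0:ℝ) 1)
    (G : ℝ → ℝ) (hG : ∀ t, G t = (μ {y | t < p y}).toReal)
    (c : ℝ) (hc : c = ∫ y, p y ∂μ)
    (η : X → ℝ) (hη : ∀ x, η x = (∫ u in (0:ℝ)..(p x), G u) - c * p x)
    (hcont : ∀ᵐ x ∂μ, μ {y | p y = p x} = 0) :
    ∀ᵐ x ∂μ, η x
      = (1 - p x) * (∫ y, p y * (if p y ≤ p x then 1 else 0) ∂μ) +
        p x * (∫ y, (1 - p y) * (if p x < p y then 1 else 0) ∂μ) := by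
  refine Filter.Eventually.of_forall (fun x => ?_)
  set q : ℝ := p x with hq
  have hq0 : 0 ≤ q := (hp01 x).1
  have hq1 : q ≤ 1 := (hp01 x).2
  -- integrability helpers
  have hbdd : ∀ (f : X → ℝ), Measurable f → (∀ y, |f y| ≤ 1) → Integrable f μ := by
    intro f hf hb
    exact (integrable_const (1:ℝ)).mono' hf.aestronglyMeasurable
      (Filter.Eventually.of_forall (fun y => by simpa using hb y))
  have hmle : MeasurableSet {y : X | p y ≤ q} := measurableSet_le hpm measurable_const
  have hmgt : MeasurableSet {y : X | q < p y} := measurableSet_lt measurable_const hpm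
  have hIle : Integrable (fun y => p y * (if p y ≤ q then 1 else 0)) μ := by
    refine hbdd _ (hpm.mul (Measurable.ite hmle measurable_const measurable_const)) fun y => ?_
    have h0 := (hp01 y).1; have h1 := (hp01 y).2
    by_cases h : p y ≤ q <;> simp [h, abs_le] <;> constructor <;> linarith
  have hIgt : Integrable (fun y => p y * (if q < p y then 1 else 0)) μ := by
    refine hbdd _ (hpm.mul (Measurable.ite hmgt measurable_const measurable_const)) fun y => ?_
    have h0 := (hp01 y).1; have h1 := (hp01 y).2
    by_cases h : q < p y <;> simp [h, abs_le] <;> constructor <;> linarith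
  have hIind : Integrable (fun y => (if q < p y then (1:ℝ) else 0)) μ := by
    refine hbdd _ (Measurable.ite hmgt measurable_const measurable_const) fun y => ?_
    by_cases h : q < p y <;> simp [h]
  have hImin : Integrable (fun y => min (p y) q) μ := by
    refine hbdd _ (hpm.min measurable_const) fun y => ?_
    have h0 := (hp01 y).1; have h1 := (hp01 y).2
    rw [abs_le]; constructor
    · simp only [le_min_iff]; constructor <;> linarith
    · exact le_trans (min_le_right _ _) hq1
  set A : ℝ := ∫ y, p y * (if p y ≤ q then 1 else 0) ∂μ
  set B : ℝ := ∫ y, p y * (if q < p y then 1 else 0) ∂μ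
  set M : ℝ := (μ {y | q < p y}).toReal
  -- ∫ indicator = M
  have hindM : (∫ y, (if q < p y then (1:ℝ) else 0) ∂μ) = M := by
    have : (fun y => (if q < p y then (1:ℝ) else 0)) = Set.indicator {y | q < p y} (fun _ => 1) := by
      ext y; by_cases h : q < p y <;> simp [Set.indicator, h]
    rw [this, integral_indicator hmgt]
    simp [M, Measure.real_def]
  -- c = A + B
  have hcAB : c = A + B := by
    rw [hc, ← integral_add hIle hIgt]
    apply integral_congr_ae; refine Filter.Eventually.of_forall (fun y => ?_)
    by_cases h : p y ≤ q
    · simp [h, not_lt.mpr h]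
    · simp [h, lt_of_not_ge h]
  -- second integral
  have hsec : (∫ y, (1 - p y) * (if q < p y then 1 else 0) ∂μ) = M - B := by
    rw [← hindM]
    have : (∫ y, (1 - p y) * (if q < p y then 1 else 0) ∂μ)
        = ∫ y, ((if q < p y then (1:ℝ) else 0) - p y * (if q < p y then 1 else 0)) ∂μ := by
      apply integral_congr_ae; refine Filter.Eventually.of_forall (fun y => ?_); ring
    rw [this, integral_sub hIind hIgt]
  -- layer cake: ∫ u in 0..q, G u = ∫ y, min (p y) q ∂μ
  have hlayer : (∫ u in (0:ℝ)..q, G u) = ∫ y, min (p y) q ∂μ := by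
    have hnn : 0 ≤ᵐ[μ] fun y => min (p y) q :=
      Filter.Eventually.of_forall (fun y => le_min (hp01 y).1 hq0)
    rw [hImin.integral_eq_integral_meas_lt hnn]
    simp only [Measure.real_def]
    have h1 : (∫ t in Set.Ioi (0:ℝ), (μ {a | t < min (p a) q}).toReal)
        = ∫ t in Set.Ioc (0:ℝ) q, (μ {a | t < min (p a) q}).toReal := by
      refine setIntegral_eq_of_subset_of_forall_diff_eq_zero (μ := volume)
        (f := fun t => (μ {a | t < min (p a) q}).toReal) (s := Set.Ioc (0:ℝ) q)
        (t := Set.Ioi (0:ℝ)) measurableSet_Ioi Set.Ioc_subset_Ioi_self (fun t ht => ?_)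
      have hqt : q < t := by
        rcases ht with ⟨ht1, ht2⟩
        simp only [Set.mem_Ioc, not_and, not_le] at ht2
        exact ht2 ht1
      have h0 : {a : X | t < min (p a) q} = ∅ := by
        ext a; simp only [Set.mem_setOf_eq, Set.mem_empty_iff_false, iff_false, not_lt]
        exact le_trans (min_le_right _ _) hqt.le
      show (μ {a | t < min (p a) q}).toReal = 0
      rw [h0]; simp
    rw [h1, intervalIntegral.integral_of_le hq0,
      MeasureTheory.integral_Ioc_eq_integral_Ioo,
      MeasureTheory.integral_Ioc_eq_integral_Ioo (f := fun t => (μ {a | t < min (p a) q}).toReal)]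
    apply setIntegral_congr_fun measurableSet_Ioo
    intro t ht
    have heq : {a : X | t < min (p a) q} = {y | t < p y} := by
      ext a; simp only [Set.mem_setOf_eq, lt_min_iff]
      exact and_iff_left ht.2
    show G t = (μ {a | t < min (p a) q}).toReal
    rw [hG t, heq]
  -- ∫ min = A + q * M
  have hminAB : (∫ y, min (p y) q ∂μ) = A + q * M := by
    have : (∫ y, min (p y) q ∂μ)
        = ∫ y, (p y * (if p y ≤ q then 1 else 0) + q * (if q < p y then 1 else 0)) ∂μ := by
      apply integral_congr_ae; refine Filter.Eventually.of_forall (fun y => ?_)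
      by_cases h : p y ≤ q
      · simp [h, not_lt.mpr h, min_eq_left h]
      · simp [h, lt_of_not_ge h, min_eq_right (le_of_not_ge h)]
    rw [this, integral_add hIle (hIind.const_mul q), integral_const_mul, hindM]
  rw [hη x, ← hq, hlayer, hminAB, hsec, hcAB]
  ring
end

section
/- Let p : X → [0,1] be measurable on (X, P_X), U uniform on [0,1], R = ∫_X 1_{p(x) > U} P_X(dx). Then Var[R] ≤ (∫_X √(p(x)(1 − p(x))) P_X(dx))² ≤ ∫_X p(x)(1 − p(x)) P_X(dx) ≤ ∫_X min(p(x), 1 − p(x)) P_X(dx). -/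
open MeasureTheory ProbabilityTheory

lemma layercake_aux {X : Type*} [MeasurableSpace X] (μ : Measure X) [SFinite μ]
    (f : X → ℝ) (hf : Measurable f) (h0 : ∀ x, 0 ≤ f x) (h1 : ∀ x, f x ≤ 1) :
    ∫⁻ u in Set.Icc (0:ℝ) 1, μ {x | u < f x} = ∫⁻ x, ENNReal.ofReal (f x) ∂μ := by
  have hset : MeasurableSet {z : ℝ × X | z.1 < f z.2} :=
    measurableSet_lt measurable_fst (hf.comp measurable_snd)
  have step1 : ∀ u : ℝ, μ {x | u < f x} =
      ∫⁻ x, {z : ℝ × X | z.1 < f z.2}.indicator 1 (u, x) ∂μ := by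
    intro u
    have hmeas : MeasurableSet {x | u < f x} := measurableSet_lt measurable_const hf
    have heq : (fun x => ({z : ℝ × X | z.1 < f z.2}.indicator 1 (u, x) : ENNReal))
        = {x | u < f x}.indicator 1 := by
      funext x
      by_cases h : u < f x <;> simp [h]
    rw [heq, lintegral_indicator_one hmeas]
  simp only [step1]
  rw [lintegral_lintegral_swap (μ := volume.restrict (Set.Icc (0:ℝ) 1)) (ν := μ)
    (f := fun u x => {z : ℝ × X | z.1 < f z.2}.indicator 1 (u, x))
    ((measurable_one.indicator hset).aemeasurable)]
  congr 1
  funext x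
  have hpt : ∀ u : ℝ, ({z : ℝ × X | z.1 < f z.2}.indicator 1 (u, x) : ENNReal)
      = (Set.Iio (f x)).indicator 1 u := by
    intro u; by_cases h : u < f x <;> simp [h]
  simp_rw [hpt]
  rw [lintegral_indicator_one measurableSet_Iio, Measure.restrict_apply measurableSet_Iio]
  have hIeq : Set.Iio (f x) ∩ Set.Icc (0:ℝ) 1 = Set.Ico 0 (f x) := by
    ext u
    simp only [Set.mem_inter_iff, Set.mem_Iio, Set.mem_Icc, Set.mem_Ico]
    constructor
    · rintro ⟨hu1, hu2, _⟩; exact ⟨hu2, hu1⟩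
    · rintro ⟨hu2, hu1⟩; exact ⟨hu1, hu2, le_trans hu1.le (h1 x)⟩
  rw [hIeq, Real.volume_Ico, sub_zero]

lemma ptwise_min {a b : ℝ} (ha0 : 0 ≤ a) (ha1 : a ≤ 1) (hb0 : 0 ≤ b) (hb1 : b ≤ 1) :
    min a b - a * b ≤ Real.sqrt (a * (1 - a)) * Real.sqrt (b * (1 - b)) := by
  rw [← Real.sqrt_mul (by nlinarith)]
  rcases le_total a b with h | h
  · rw [min_eq_left h]
    have heq : a - a * b = Real.sqrt ((a * (1 - b)) ^ 2) := by
      rw [Real.sqrt_sq (by nlinarith)]; ring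
    rw [heq]
    apply Real.sqrt_le_sqrt
    nlinarith [mul_nonneg ha0 (sub_nonneg.2 hb1), mul_nonneg ha0 (sub_nonneg.2 (h.trans hb1))]
  · rw [min_eq_right h]
    have heq : b - a * b = Real.sqrt ((b * (1 - a)) ^ 2) := by
      rw [Real.sqrt_sq (by nlinarith)]; ring
    rw [heq]
    apply Real.sqrt_le_sqrt
    nlinarith [mul_nonneg hb0 (sub_nonneg.2 ha1), mul_nonneg hb0 (sub_nonneg.2 (h.trans ha1))]

theorem stmt_19
    {Ω X : Type*} [MeasurableSpace Ω] [MeasurableSpace X]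
    (P : Measure Ω) [IsProbabilityMeasure P]
    (μ : Measure X) [IsProbabilityMeasure μ]
    (p : X → ℝ) (hpm : Measurable p) (hp01 : ∀ x, p x ∈ Set.Icc (0:ℝ) 1)
    (U : Ω → ℝ) (hUm : Measurable U)
    (hU : Measure.map U P = volume.restrict (Set.Icc (0:ℝ) 1))
    (R : Ω → ℝ) (hR : ∀ ω, R ω = (μ {x | U ω < p x}).toReal) :
    variance R P ≤ (∫ x, Real.sqrt (p x * (1 - p x)) ∂μ) ^ 2 ∧
    (∫ x, Real.sqrt (p x * (1 - p x)) ∂μ) ^ 2 ≤ ∫ x, p x * (1 - p x) ∂μ ∧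
    (∫ x, p x * (1 - p x) ∂μ) ≤ ∫ x, min (p x) (1 - p x) ∂μ := by
  have h0p : ∀ x, 0 ≤ p x := fun x => (hp01 x).1
  have h1p : ∀ x, p x ≤ 1 := fun x => (hp01 x).2
  set g : ℝ → ℝ := fun u => (μ {x | u < p x}).toReal with hgdef
  have hganti : Antitone g := fun u v huv =>
    ENNReal.toReal_mono (measure_ne_top _ _)
      (measure_mono (fun x hx => lt_of_le_of_lt huv hx))
  have hgm : Measurable g := hganti.measurable
  have hg0 : ∀ u, 0 ≤ g u := fun u => ENNReal.toReal_nonneg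
  have hg1 : ∀ u, g u ≤ 1 := fun u =>
    ENNReal.toReal_le_of_le_ofReal zero_le_one (by simpa using prob_le_one (μ := μ))
  have hRg : R = fun ω => g (U ω) := funext fun ω => hR ω
  have hmap : ∀ (h : ℝ → ℝ), Measurable h →
      ∫ ω, h (U ω) ∂P = ∫ u in Set.Icc (0:ℝ) 1, h u := by
    intro h hh
    rw [← integral_map hUm.aemeasurable hh.aestronglyMeasurable, hU]
  -- mean of R
  have hA : ∫ ω, R ω ∂P = ∫ x, p x ∂μ := by
    rw [hRg, hmap g hgm,
      integral_eq_lintegral_of_nonneg_ae (ae_of_all _ hg0) hgm.aestronglyMeasurable]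
    have h1 : ∀ u, ENNReal.ofReal (g u) = μ {x | u < p x} := fun u =>
      ENNReal.ofReal_toReal (measure_ne_top _ _)
    simp only [h1]
    rw [layercake_aux μ p hpm h0p h1p,
      ← integral_eq_lintegral_of_nonneg_ae (ae_of_all _ h0p) hpm.aestronglyMeasurable]
  -- second moment of R
  have hminm : Measurable (fun z : X × X => min (p z.1) (p z.2)) :=
    (hpm.comp measurable_fst).min (hpm.comp measurable_snd)
  have hB : ∫ ω, (R ω) ^ 2 ∂P = ∫ z : X × X, min (p z.1) (p z.2) ∂(μ.prod μ) := by
    have hRg2 : (fun ω => (R ω) ^ 2) = fun ω => (fun u => (g u) ^ 2) (U ω) := by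
      funext ω; rw [hRg]
    rw [hRg2, hmap _ (hgm.pow_const 2),
      integral_eq_lintegral_of_nonneg_ae (ae_of_all _ fun u => sq_nonneg (g u))
        ((hgm.pow_const 2).aestronglyMeasurable)]
    have hsq : ∀ u : ℝ, ENNReal.ofReal ((g u) ^ 2)
        = (μ.prod μ) {z : X × X | u < min (p z.1) (p z.2)} := by
      intro u
      have hseteq : {z : X × X | u < min (p z.1) (p z.2)}
          = {x | u < p x} ×ˢ {x | u < p x} := by
        ext z
        simp [lt_min_iff, Set.mem_prod]
      rw [ENNReal.ofReal_pow (hg0 u), ENNReal.ofReal_toReal (measure_ne_top _ _),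
        hseteq, Measure.prod_prod, sq]
    simp only [hsq]
    rw [layercake_aux (μ.prod μ) _ hminm (fun z => le_min (h0p _) (h0p _))
        (fun z => min_le_of_left_le (h1p _)),
      ← integral_eq_lintegral_of_nonneg_ae
        (ae_of_all _ fun z => le_min (h0p _) (h0p _)) hminm.aestronglyMeasurable]
  -- integrability helpers
  have hint2 : ∀ (f : X × X → ℝ), Measurable f → (∀ y, |f y| ≤ 1) → Integrable f (μ.prod μ) := by
    intro f hf hb
    refine memLp_one_iff_integrable.mp ?_
    exact MemLp.of_bound hf.aestronglyMeasurable 1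
      (ae_of_all _ fun y => by rw [Real.norm_eq_abs]; exact hb y)
  have hint1 : ∀ (f : X → ℝ), Measurable f → (∀ y, |f y| ≤ 1) → Integrable f μ := by
    intro f hf hb
    refine memLp_one_iff_integrable.mp ?_
    exact MemLp.of_bound hf.aestronglyMeasurable 1
      (ae_of_all _ fun y => by rw [Real.norm_eq_abs]; exact hb y)
  have hsqrtm : Measurable (fun x => Real.sqrt (p x * (1 - p x))) :=
    (hpm.mul (measurable_const.sub hpm)).sqrt
  have habs_pq : ∀ x, |p x * (1 - p x)| ≤ 1 := fun x => by
    rw [abs_of_nonneg (by nlinarith [h0p x, h1p x])]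
    nlinarith [h0p x, h1p x]
  have habs_sqrt : ∀ x, |Real.sqrt (p x * (1 - p x))| ≤ 1 := fun x => by
    rw [abs_of_nonneg (Real.sqrt_nonneg _)]
    exact Real.sqrt_le_one.mpr (by nlinarith [h0p x, h1p x])
  -- R is in L2
  have hRmeas : Measurable R := by rw [hRg]; exact hgm.comp hUm
  have hRL2 : MemLp R 2 P := by
    apply MemLp.of_bound hRmeas.aestronglyMeasurable 1
    filter_upwards with ω
    rw [Real.norm_eq_abs, hR ω, abs_of_nonneg ENNReal.toReal_nonneg]
    exact ENNReal.toReal_le_of_le_ofReal zero_le_one (by simpa using prob_le_one (μ := μ))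
  -- part 1
  have part1 : variance R P ≤ (∫ x, Real.sqrt (p x * (1 - p x)) ∂μ) ^ 2 := by
    have hintmin : Integrable (fun z : X × X => min (p z.1) (p z.2)) (μ.prod μ) :=
      hint2 _ hminm (fun z => by
        rw [abs_of_nonneg (le_min (h0p _) (h0p _))]
        exact min_le_of_left_le (h1p _))
    have hintmul : Integrable (fun z : X × X => p z.1 * p z.2) (μ.prod μ) :=
      hint2 (fun z => p z.1 * p z.2) ((hpm.comp measurable_fst).mul (hpm.comp measurable_snd))
        (fun z => by
          show |p z.1 * p z.2| ≤ 1
          rw [abs_of_nonneg (mul_nonneg (h0p _) (h0p _))]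
          exact mul_le_one₀ (h1p _) (h0p _) (h1p _))
    have hvar : variance R P
        = ∫ z : X × X, (min (p z.1) (p z.2) - p z.1 * p z.2) ∂(μ.prod μ) := by
      rw [variance_eq_sub hRL2]
      simp only [Pi.pow_apply]
      rw [hA, hB]
      have hmul : (∫ x, p x ∂μ) ^ 2 = ∫ z : X × X, p z.1 * p z.2 ∂(μ.prod μ) := by
        rw [integral_prod_mul p p, sq]
      rw [hmul, ← integral_sub hintmin hintmul]
    rw [hvar]
    have hfinal : (∫ x, Real.sqrt (p x * (1 - p x)) ∂μ) ^ 2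
        = ∫ z : X × X, Real.sqrt (p z.1 * (1 - p z.1)) * Real.sqrt (p z.2 * (1 - p z.2))
            ∂(μ.prod μ) := by
      rw [integral_prod_mul (fun x => Real.sqrt (p x * (1 - p x)))
        (fun x => Real.sqrt (p x * (1 - p x))), sq]
    rw [hfinal]
    apply integral_mono
    · exact hintmin.sub hintmul
    · exact hint2 (fun z => Real.sqrt (p z.1 * (1 - p z.1)) * Real.sqrt (p z.2 * (1 - p z.2)))
        ((hsqrtm.comp measurable_fst).mul (hsqrtm.comp measurable_snd))
        (fun z => by
          show |Real.sqrt (p z.1 * (1 - p z.1)) * Real.sqrt (p z.2 * (1 - p z.2))| ≤ 1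
          rw [abs_of_nonneg (mul_nonneg (Real.sqrt_nonneg _) (Real.sqrt_nonneg _))]
          have h1 : Real.sqrt (p z.1 * (1 - p z.1)) ≤ 1 := by
            have := habs_sqrt z.1
            rwa [abs_of_nonneg (Real.sqrt_nonneg _)] at this
          have h2 : Real.sqrt (p z.2 * (1 - p z.2)) ≤ 1 := by
            have := habs_sqrt z.2
            rwa [abs_of_nonneg (Real.sqrt_nonneg _)] at this
          calc Real.sqrt (p z.1 * (1 - p z.1)) * Real.sqrt (p z.2 * (1 - p z.2))
              ≤ 1 * 1 := mul_le_mul h1 h2 (Real.sqrt_nonneg _) zero_le_one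
            _ = 1 := one_mul 1)
    · intro z
      exact ptwise_min (h0p z.1) (h1p z.1) (h0p z.2) (h1p z.2)
  -- part 2
  have part2 : (∫ x, Real.sqrt (p x * (1 - p x)) ∂μ) ^ 2 ≤ ∫ x, p x * (1 - p x) ∂μ := by
    have hfL2 : MemLp (fun x => Real.sqrt (p x * (1 - p x))) 2 μ := by
      apply MemLp.of_bound hsqrtm.aestronglyMeasurable 1
      filter_upwards with x
      rw [Real.norm_eq_abs]
      exact habs_sqrt x
    have hv := variance_nonneg (fun x => Real.sqrt (p x * (1 - p x))) μ
    rw [variance_eq_sub hfL2] at hv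
    have hsq : ∫ x, ((fun x => Real.sqrt (p x * (1 - p x))) ^ 2) x ∂μ
        = ∫ x, p x * (1 - p x) ∂μ := by
      apply integral_congr_ae
      filter_upwards with x
      show (Real.sqrt (p x * (1 - p x))) ^ 2 = p x * (1 - p x)
      exact Real.sq_sqrt (by nlinarith [h0p x, h1p x])
    rw [hsq] at hv
    linarith
  -- part 3
  have part3 : (∫ x, p x * (1 - p x) ∂μ) ≤ ∫ x, min (p x) (1 - p x) ∂μ := by
    apply integral_mono
    · exact hint1 _ (hpm.mul (measurable_const.sub hpm)) habs_pq
    · exact hint1 (fun x => min (p x) (1 - p x)) (hpm.min (measurable_const.sub hpm))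
        (fun x => by
          show |min (p x) (1 - p x)| ≤ 1
          rw [abs_le]
          refine ⟨?_, min_le_of_left_le (h1p x)⟩
          refine le_min ?_ ?_ <;> nlinarith [h0p x, h1p x])
    · intro x
      show p x * (1 - p x) ≤ min (p x) (1 - p x)
      refine le_min ?_ ?_
      · nlinarith [h0p x, h1p x]
      · nlinarith [h0p x, h1p x]
  exact ⟨part1, part2, part3⟩
end
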